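/- arXiv:2105.09161 — 3 statements merged into one kernel-verified Lean document; each statement's English description precedes it below -/
import Mathlib

section
/- Let R be a commutative Noetherian ring, let A be a faithfully flat commutative R-algebra, and let I be an ideal of R. Then I is a syzygetic ideal of R if and only if the extended ideal IA is a syzygetic ideal of A. -/
universe u v

open TensorProduct in
/-- An ideal `I` of a commutative ring `R` is *syzygetic* if the complex
`∧²(I) → I ⊗ I → I² → 0` is exact, where the first map sends `u ∧ v` to `v ⊗ u - u ⊗ v`
and the second map is induced by multiplication. Equivalently, the multiplication map
`I ⊗ I → R` has range `I²` and kernel spanned by the elements `b ⊗ a - a ⊗ b`. -/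
def Ideal.IsSyzygetic {R : Type*} [CommRing R] (I : Ideal R) : Prop :=
  LinearMap.range (Submodule.mulMap I I) = I * I ∧
    LinearMap.ker (Submodule.mulMap I I) =
      Submodule.span R {w : I ⊗[R] I | ∃ a b : I, w = b ⊗ₜ a - a ⊗ₜ b}

open TensorProduct

set_option maxHeartbeats 1000000
set_option synthInstance.maxHeartbeats 400000

section Aux

variable (R : Type u) [CommRing R] (A : Type v) [CommRing A] [Algebra R A]

/-- `span A` of the image of an `R`-span under `w ↦ 1 ⊗ w`. -/
private lemma syzAux_span_tmul_span {M : Type*} [AddCommGroup M] [Module R M] (s : Set M) :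
    Submodule.span A ((fun w => (1 : A) ⊗ₜ[R] w) ''
        ((Submodule.span R s : Submodule R M) : Set M)) =
      Submodule.span A ((fun w => (1 : A) ⊗ₜ[R] w) '' s) := by
  refine le_antisymm (Submodule.span_le.2 ?_)
    (Submodule.span_mono (Set.image_mono Submodule.subset_span))
  rintro _ ⟨x, hx, rfl⟩
  induction hx using Submodule.span_induction with
  | mem y hy => exact Submodule.subset_span ⟨y, hy, rfl⟩
  | zero => simp
  | add a b _ _ ha hb =>
      show (1 : A) ⊗ₜ[R] (a + b) ∈ _
      rw [tmul_add]; exact add_mem ha hb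
  | smul r y _ hy =>
      show (1 : A) ⊗ₜ[R] (r • y) ∈ _
      rw [tmul_smul, ← algebraMap_smul A r ((1 : A) ⊗ₜ[R] y)]
      exact Submodule.smul_mem _ _ hy

private lemma syzAux_range_baseChange {M N : Type*} [AddCommGroup M] [Module R M]
    [AddCommGroup N] [Module R N] (f : M →ₗ[R] N) :
    LinearMap.range (f.baseChange A) =
      Submodule.span A ((fun w => (1 : A) ⊗ₜ[R] w) '' ((LinearMap.range f : Submodule R N) : Set N)) := by
  refine le_antisymm ?_ (Submodule.span_le.2 ?_)
  · rintro _ ⟨u, rfl⟩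
    induction u with
    | zero => simp
    | tmul a x =>
        rw [LinearMap.baseChange_tmul]
        have h : (a ⊗ₜ[R] f x : A ⊗[R] N) = a • ((1 : A) ⊗ₜ[R] f x) := by
          rw [smul_tmul', smul_eq_mul, mul_one]
        rw [h]
        exact Submodule.smul_mem _ _ (Submodule.subset_span ⟨f x, ⟨x, rfl⟩, rfl⟩)
    | add u v hu hv => rw [map_add]; exact add_mem hu hv
  · rintro _ ⟨_, ⟨x, rfl⟩, rfl⟩
    exact ⟨1 ⊗ₜ x, by rw [LinearMap.baseChange_tmul]⟩

variable (I : Ideal R)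

/-- The natural `A`-linear map `A ⊗[R] I → A`. -/
private noncomputable def syzEps : A ⊗[R] I →ₗ[A] A :=
  (TensorProduct.AlgebraTensorModule.rid R A A).toLinearMap ∘ₗ LinearMap.baseChange A I.subtype

private lemma syzEps_tmul (a : A) (x : I) :
    syzEps R A I (a ⊗ₜ x) = algebraMap R A x * a := by
  simp [syzEps, Algebra.smul_def]

private lemma syzEps_injective [Module.Flat R A] : Function.Injective (syzEps R A I) := by
  have h1 : Function.Injective (LinearMap.baseChange A I.subtype) := by
    show Function.Injective ⇑(LinearMap.baseChange A I.subtype)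
    rw [LinearMap.baseChange_eq_ltensor]
    exact Module.Flat.lTensor_preserves_injective_linearMap _ Subtype.val_injective
  exact (TensorProduct.AlgebraTensorModule.rid R A A).injective.comp h1

private lemma syzEps_range :
    LinearMap.range (syzEps R A I) = (I.map (algebraMap R A) : Submodule A A) := by
  have hmap : (I.map (algebraMap R A) : Submodule A A) =
      Submodule.span A (algebraMap R A '' (I : Set R)) := rfl
  rw [hmap]
  refine le_antisymm ?_ (Submodule.span_le.2 ?_)
  · rintro _ ⟨u, rfl⟩
    induction u with
    | zero => simp
    | tmul a x =>
        rw [syzEps_tmul]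
        have : algebraMap R A x * a = a • algebraMap R A (x : R) := by
          rw [smul_eq_mul, mul_comm]
        rw [this]
        exact Submodule.smul_mem _ _ (Submodule.subset_span ⟨(x : R), x.2, rfl⟩)
    | add u v hu hv => rw [map_add]; exact add_mem hu hv
  · rintro _ ⟨x, hx, rfl⟩
    exact ⟨1 ⊗ₜ ⟨x, hx⟩, by rw [syzEps_tmul, mul_one]⟩

/-- `A ⊗[R] I ≃ₗ[A] IA`. -/
private noncomputable def syzE [Module.Flat R A] :
    (A ⊗[R] I) ≃ₗ[A] (I.map (algebraMap R A) : Submodule A A) :=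
  (LinearEquiv.ofInjective _ (syzEps_injective R A I)).trans
    (LinearEquiv.ofEq _ _ (syzEps_range R A I))

private lemma syzE_coe [Module.Flat R A] (u : A ⊗[R] I) :
    (syzE R A I u : A) = syzEps R A I u := rfl

/-- The comparison equivalence `A ⊗ (I ⊗ I) ≃ IA ⊗ IA`. -/
private noncomputable def syzPhi [Module.Flat R A] :
    (A ⊗[R] (I ⊗[R] I)) ≃ₗ[A]
      ((I.map (algebraMap R A) : Submodule A A) ⊗[A] (I.map (algebraMap R A) : Submodule A A)) :=
  (TensorProduct.AlgebraTensorModule.distribBaseChange R A I I).trans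
    (TensorProduct.congr (syzE R A I) (syzE R A I))

private lemma syzPhi_tmul [Module.Flat R A] (a : A) (x y : I) :
    syzPhi R A I (a ⊗ₜ (x ⊗ₜ y)) =
      (syzE R A I (a ⊗ₜ x)) ⊗ₜ[A] (syzE R A I ((1 : A) ⊗ₜ y)) := by
  have h0 : (TensorProduct.AlgebraTensorModule.distribBaseChange R A (↥I) (↥I)).symm
      ((a ⊗ₜ x) ⊗ₜ[A] ((1 : A) ⊗ₜ y)) = a ⊗ₜ (x ⊗ₜ y) := by
    simp [TensorProduct.AlgebraTensorModule.distribBaseChange]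
  have h1 : TensorProduct.AlgebraTensorModule.distribBaseChange R A (↥I) (↥I)
      (a ⊗ₜ (x ⊗ₜ y)) = (a ⊗ₜ x) ⊗ₜ[A] ((1 : A) ⊗ₜ y) := by
    rw [← h0, LinearEquiv.apply_symm_apply]
  simp only [syzPhi, LinearEquiv.trans_apply, h1, TensorProduct.congr_tmul]

/-- Base change of the multiplication map. -/
private noncomputable def syzMu : A ⊗[R] (I ⊗[R] I) →ₗ[A] A :=
  (TensorProduct.AlgebraTensorModule.rid R A A).toLinearMap ∘ₗ
    LinearMap.baseChange A (Submodule.mulMap I I)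

private lemma syzMu_tmul (a : A) (w : I ⊗[R] I) :
    syzMu R A I (a ⊗ₜ w) = algebraMap R A (Submodule.mulMap I I w) * a := by
  simp [syzMu, Algebra.smul_def]

private lemma syz_mulMap_comp_phi [Module.Flat R A] :
    (Submodule.mulMap (I.map (algebraMap R A) : Submodule A A)
        (I.map (algebraMap R A) : Submodule A A)) ∘ₗ (syzPhi R A I).toLinearMap
      = syzMu R A I := by
  apply LinearMap.restrictScalars_injective R
  apply TensorProduct.ext'
  intro a w
  simp only [LinearMap.coe_restrictScalars, LinearMap.comp_apply, LinearEquiv.coe_coe]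
  induction w with
  | zero =>
      rw [tmul_zero, map_zero, map_zero, map_zero]
  | tmul x y =>
      rw [syzPhi_tmul, Submodule.mulMap_tmul, syzE_coe, syzE_coe, syzEps_tmul, syzEps_tmul,
        syzMu_tmul, Submodule.mulMap_tmul]
      push_cast [map_mul]
      ring
  | add u v hu hv =>
      rw [tmul_add, map_add, map_add, map_add, hu, hv]

private lemma syz_ker_mu [Module.Flat R A] :
    LinearMap.ker (syzMu R A I)
      = LinearMap.range (LinearMap.baseChange A (LinearMap.ker (Submodule.mulMap I I)).subtype) := by
  have hex : Function.Exact (LinearMap.ker (Submodule.mulMap I I)).subtype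
      (Submodule.mulMap I I) :=
    LinearMap.exact_iff.2 (Submodule.range_subtype _).symm
  have hex2 := Module.Flat.lTensor_exact (R := R) A
    (N := ↥(LinearMap.ker (Submodule.mulMap I I))) (N' := ↥I ⊗[R] ↥I) (N'' := R)
    (f := (LinearMap.ker (Submodule.mulMap I I)).subtype) (g := Submodule.mulMap I I) hex
  ext u
  have h1 : (syzMu R A I u = 0) ↔
      (Submodule.mulMap I I).lTensor A u = 0 := by
    rw [← congrFun (LinearMap.baseChange_eq_ltensor (f := Submodule.mulMap I I) (A := A)) u]
    exact LinearEquiv.map_eq_zero_iff (TensorProduct.AlgebraTensorModule.rid R A A)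
      (x := LinearMap.baseChange A (Submodule.mulMap I I) u)
  simp only [LinearMap.mem_ker, LinearMap.mem_range]
  rw [h1, hex2 u]
  constructor
  · rintro ⟨x, hx⟩
    exact ⟨x, by
      rw [congrFun (LinearMap.baseChange_eq_ltensor
        (f := (LinearMap.ker (Submodule.mulMap I I)).subtype) (A := A)) x]; exact hx⟩
  · rintro ⟨x, hx⟩
    exact ⟨x, by
      rw [← congrFun (LinearMap.baseChange_eq_ltensor
        (f := (LinearMap.ker (Submodule.mulMap I I)).subtype) (A := A)) x]; exact hx⟩

private lemma syz_map_phi_span [Module.Flat R A] :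
    Submodule.map (syzPhi R A I).toLinearMap
        (Submodule.span A ((fun w => (1 : A) ⊗ₜ[R] w) ''
          {w : I ⊗[R] I | ∃ a b : I, w = b ⊗ₜ a - a ⊗ₜ b}))
      = Submodule.span A {w : (I.map (algebraMap R A) : Submodule A A) ⊗[A]
          (I.map (algebraMap R A) : Submodule A A) |
            ∃ a b : (I.map (algebraMap R A) : Submodule A A), w = b ⊗ₜ a - a ⊗ₜ b} := by
  rw [Submodule.map_span]
  refine le_antisymm (Submodule.span_le.2 ?_) (Submodule.span_le.2 ?_)
  · rintro _ ⟨_, ⟨w, ⟨a, b, rfl⟩, rfl⟩, rfl⟩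
    refine Submodule.subset_span ⟨syzE R A I ((1 : A) ⊗ₜ a), syzE R A I ((1 : A) ⊗ₜ b), ?_⟩
    show syzPhi R A I ((1 : A) ⊗ₜ (b ⊗ₜ a - a ⊗ₜ b)) = _
    rw [tmul_sub, map_sub, syzPhi_tmul, syzPhi_tmul]
  · rintro _ ⟨a, b, rfl⟩
    simp only [SetLike.mem_coe]
    obtain ⟨u, rfl⟩ := (syzE R A I).surjective a
    obtain ⟨v, rfl⟩ := (syzE R A I).surjective b
    induction u with
    | zero =>
        simp only [map_zero, tmul_zero, zero_tmul, sub_zero, zero_sub]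
        simp
    | tmul a₀ x =>
        induction v with
        | zero => simp only [map_zero, tmul_zero, zero_tmul, sub_zero, zero_sub]; simp
        | tmul b₀ y =>
            have ha : syzE R A I (a₀ ⊗ₜ x) = a₀ • syzE R A I ((1 : A) ⊗ₜ x) := by
              rw [← map_smul]
              congr 1
              rw [smul_tmul', smul_eq_mul, mul_one]
            have hb : syzE R A I (b₀ ⊗ₜ y) = b₀ • syzE R A I ((1 : A) ⊗ₜ y) := by
              rw [← map_smul]
              congr 1
              rw [smul_tmul', smul_eq_mul, mul_one]
            rw [ha, hb]
            have key : (b₀ • syzE R A I ((1:A) ⊗ₜ y)) ⊗ₜ[A] (a₀ • syzE R A I ((1:A) ⊗ₜ x))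
                - (a₀ • syzE R A I ((1:A) ⊗ₜ x)) ⊗ₜ[A] (b₀ • syzE R A I ((1:A) ⊗ₜ y))
                = (a₀ * b₀) • (syzE R A I ((1:A) ⊗ₜ y) ⊗ₜ[A] syzE R A I ((1:A) ⊗ₜ x)
                    - syzE R A I ((1:A) ⊗ₜ x) ⊗ₜ[A] syzE R A I ((1:A) ⊗ₜ y)) := by
              have t1 : (b₀ • syzE R A I ((1:A) ⊗ₜ y)) ⊗ₜ[A] (a₀ • syzE R A I ((1:A) ⊗ₜ x))
                  = (a₀ * b₀) • (syzE R A I ((1:A) ⊗ₜ y) ⊗ₜ[A] syzE R A I ((1:A) ⊗ₜ x)) := by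
                rw [← smul_tmul', tmul_smul, smul_smul, mul_comm b₀ a₀]
              have t2 : (a₀ • syzE R A I ((1:A) ⊗ₜ x)) ⊗ₜ[A] (b₀ • syzE R A I ((1:A) ⊗ₜ y))
                  = (a₀ * b₀) • (syzE R A I ((1:A) ⊗ₜ x) ⊗ₜ[A] syzE R A I ((1:A) ⊗ₜ y)) := by
                rw [← smul_tmul', tmul_smul, smul_smul]
              rw [t1, t2, smul_sub]
            rw [key]
            refine Submodule.smul_mem _ _ (Submodule.subset_span ?_)
            refine ⟨(1 : A) ⊗ₜ (y ⊗ₜ x - x ⊗ₜ y), ⟨y ⊗ₜ x - x ⊗ₜ y, ⟨x, y, rfl⟩, rfl⟩, ?_⟩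
            show syzPhi R A I ((1 : A) ⊗ₜ (y ⊗ₜ x - x ⊗ₜ y)) = _
            rw [tmul_sub, map_sub, syzPhi_tmul, syzPhi_tmul]
        | add v₁ v₂ h₁ h₂ =>
            rw [map_add]
            have heq : (syzE R A I v₁ + syzE R A I v₂) ⊗ₜ[A] syzE R A I (a₀ ⊗ₜ x)
                  - syzE R A I (a₀ ⊗ₜ x) ⊗ₜ[A] (syzE R A I v₁ + syzE R A I v₂)
                = (syzE R A I v₁ ⊗ₜ[A] syzE R A I (a₀ ⊗ₜ x)
                    - syzE R A I (a₀ ⊗ₜ x) ⊗ₜ[A] syzE R A I v₁)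
                  + (syzE R A I v₂ ⊗ₜ[A] syzE R A I (a₀ ⊗ₜ x)
                    - syzE R A I (a₀ ⊗ₜ x) ⊗ₜ[A] syzE R A I v₂) := by
              rw [add_tmul, tmul_add]; abel
            rw [heq]
            exact add_mem h₁ h₂
    | add u₁ u₂ h₁ h₂ =>
        rw [map_add]
        have heq : syzE R A I v ⊗ₜ[A] (syzE R A I u₁ + syzE R A I u₂)
              - (syzE R A I u₁ + syzE R A I u₂) ⊗ₜ[A] syzE R A I v
            = (syzE R A I v ⊗ₜ[A] syzE R A I u₁ - syzE R A I u₁ ⊗ₜ[A] syzE R A I v)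
              + (syzE R A I v ⊗ₜ[A] syzE R A I u₂ - syzE R A I u₂ ⊗ₜ[A] syzE R A I v) := by
          rw [add_tmul, tmul_add]; abel
        rw [heq]
        exact add_mem h₁ h₂

private lemma syz_ker_eq_span_iff [Module.FaithfullyFlat R A] :
    (LinearMap.ker (Submodule.mulMap I I) =
        Submodule.span R {w : I ⊗[R] I | ∃ a b : I, w = b ⊗ₜ a - a ⊗ₜ b})
    ↔ (LinearMap.ker (Submodule.mulMap (I.map (algebraMap R A) : Submodule A A)
          (I.map (algebraMap R A) : Submodule A A)) =
        Submodule.span A {w : (I.map (algebraMap R A) : Submodule A A) ⊗[A]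
            (I.map (algebraMap R A) : Submodule A A) |
          ∃ a b : (I.map (algebraMap R A) : Submodule A A), w = b ⊗ₜ a - a ⊗ₜ b}) := by
  have hker : LinearMap.ker (Submodule.mulMap (I.map (algebraMap R A) : Submodule A A)
        (I.map (algebraMap R A) : Submodule A A))
      = Submodule.map (syzPhi R A I).toLinearMap (LinearMap.ker (syzMu R A I)) := by
    rw [← syz_mulMap_comp_phi, LinearMap.ker_comp,
      Submodule.map_comap_eq_of_surjective (f := (syzPhi R A I).toLinearMap)
        (syzPhi R A I).surjective]
  have hinj : Function.Injective (Submodule.map (syzPhi R A I).toLinearMap) :=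
    Submodule.map_injective_of_injective (syzPhi R A I).injective
  have step2 : (LinearMap.ker (Submodule.mulMap (I.map (algebraMap R A) : Submodule A A)
        (I.map (algebraMap R A) : Submodule A A)) =
      Submodule.span A {w : (I.map (algebraMap R A) : Submodule A A) ⊗[A]
          (I.map (algebraMap R A) : Submodule A A) |
        ∃ a b : (I.map (algebraMap R A) : Submodule A A), w = b ⊗ₜ a - a ⊗ₜ b})
      ↔ LinearMap.ker (syzMu R A I) = Submodule.span A ((fun w => (1 : A) ⊗ₜ[R] w) ''
          {w : I ⊗[R] I | ∃ a b : I, w = b ⊗ₜ a - a ⊗ₜ b}) := by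
    rw [hker, ← syz_map_phi_span R A I]
    exact ⟨fun h => hinj h, fun h => by rw [h]⟩
  rw [step2, syz_ker_mu]
  constructor
  · intro hKN
    have h := syzAux_range_baseChange R A (M := ↥(LinearMap.ker (Submodule.mulMap I I)))
      (N := ↥I ⊗[R] ↥I) (LinearMap.ker (Submodule.mulMap I I)).subtype
    rw [h, Submodule.range_subtype, hKN, syzAux_span_tmul_span]
  · intro hstar
    have hNK : Submodule.span R {w : I ⊗[R] I | ∃ a b : I, w = b ⊗ₜ a - a ⊗ₜ b}
        ≤ LinearMap.ker (Submodule.mulMap I I) := by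
      rw [Submodule.span_le]
      rintro w ⟨a, b, rfl⟩
      simp only [SetLike.mem_coe, LinearMap.mem_ker, map_sub, Submodule.mulMap_tmul]
      rw [mul_comm]
      ring
    refine le_antisymm ?_ hNK
    set N := Submodule.span R {w : I ⊗[R] I | ∃ a b : I, w = b ⊗ₜ a - a ⊗ₜ b} with hN
    set K := LinearMap.ker (Submodule.mulMap I I) with hK
    set g : K →ₗ[R] (I ⊗[R] I) ⧸ N := N.mkQ ∘ₗ K.subtype with hg
    have hspan_le : Submodule.span A ((fun w => (1 : A) ⊗ₜ[R] w) ''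
        {w : I ⊗[R] I | ∃ a b : I, w = b ⊗ₜ a - a ⊗ₜ b})
        ≤ LinearMap.ker (LinearMap.baseChange A N.mkQ) := by
      rw [Submodule.span_le]
      rintro _ ⟨w, hw, rfl⟩
      simp only [SetLike.mem_coe, LinearMap.mem_ker, LinearMap.baseChange_tmul]
      rw [show N.mkQ w = 0 from (Submodule.Quotient.mk_eq_zero N).2 (Submodule.subset_span hw)]
      rw [tmul_zero]
    have hbc : LinearMap.baseChange A g = 0 := by
      apply LinearMap.ext
      intro u
      have hcomp : LinearMap.baseChange A g u =
          LinearMap.baseChange A N.mkQ (LinearMap.baseChange A K.subtype u) := by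
        rw [hg, LinearMap.baseChange_comp]; rfl
      rw [hcomp]
      have hmem : LinearMap.baseChange A K.subtype u ∈
          Submodule.span A ((fun w => (1 : A) ⊗ₜ[R] w) ''
            {w : I ⊗[R] I | ∃ a b : I, w = b ⊗ₜ a - a ⊗ₜ b}) := by
        rw [← hstar]
        exact ⟨u, rfl⟩
      exact hspan_le hmem
    have hg0 : g = 0 := by
      rw [Module.FaithfullyFlat.zero_iff_lTensor_zero R A
        (N := ↥K) (N' := (↥I ⊗[R] ↥I) ⧸ N) g]
      apply LinearMap.ext
      intro u
      rw [← congrFun (LinearMap.baseChange_eq_ltensor (f := g) (A := A)) u, hbc]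
      rfl
    intro x hx
    have := DFunLike.congr_fun hg0 (⟨x, hx⟩ : K)
    simp only [hg, LinearMap.comp_apply, Submodule.subtype_apply, LinearMap.zero_apply] at this
    exact (Submodule.Quotient.mk_eq_zero N).1 this

end Aux

/-- Let `R` be a Noetherian commutative ring, `A` a faithfully flat commutative `R`-algebra
and `I` an ideal of `R`. Then `I` is syzygetic if and only if the extended ideal `IA`
is syzygetic. -/
theorem isSyzygetic_iff_map_isSyzygetic_of_faithfullyFlat
    (R : Type u) [CommRing R] [IsNoetherianRing R]
    (A : Type v) [CommRing A] [Algebra R A] [Module.FaithfullyFlat R A]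
    (I : Ideal R) :
    I.IsSyzygetic ↔ (I.map (algebraMap R A)).IsSyzygetic := by
  unfold Ideal.IsSyzygetic
  rw [Submodule.mulMap_range, Submodule.mulMap_range]
  simp only [eq_self_iff_true, true_and]
  exact syz_ker_eq_span_iff R A I
end

section
/- Let (R, m, k) be a regular local ring of Krull dimension 5, let x, y, z, t, u be a regular system of parameters of R, let I be the ideal generated by f₁ = y² − xz, f₂ = yz − xt, f₃ = z² − yt, f₄ = yt − xu, f₅ = zt − yu, f₆ = t² − zu, f₇ = zu − x³, f₈ = tu − x²y, f₉ = u² − x²z, and let H = (f₁, f₂, f₃, f₄, f₅, f₆, f₇, f₉) be the ideal generated by all the fᵢ except f₈. Then f₈ ∉ H, while f₈² ∈ H·I; in particular, the colon ideal H : f₈ is a proper ideal of R while HI : f₈² = R, so H : f₈ is strictly contained in HI : f₈². -/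
universe u

/-- A commutative ring `R` is a *regular local ring* if it is Noetherian, local, and its
maximal ideal can be generated by `dim R` elements. -/
def IsRegularLocalRing' (R : Type*) [CommRing R] : Prop :=
  IsNoetherianRing R ∧ ∃ _ : IsLocalRing R, ∃ s : Finset R,
    Ideal.span (s : Set R) = IsLocalRing.maximalIdeal R ∧
      (s.card : WithBot ℕ∞) = ringKrullDim R

open IsLocalRing Ideal

/-- A finitely generated module over a commutative ring, killed by a maximal ideal,
is Artinian. -/
lemma artinian_of_maximal_smul_top_eq_bot {S : Type u} [CommRing S] (I : Ideal S) [I.IsMaximal]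
    (M : Type u) [AddCommGroup M] [Module S M] [Module.Finite S M]
    (h : I • (⊤ : Submodule S M) = ⊥) : IsArtinian S M := by
  have hT : Module.IsTorsionBySet S M I := by
    intro m i
    have : (i : S) • m ∈ I • (⊤ : Submodule S M) :=
      Submodule.smul_mem_smul i.2 Submodule.mem_top
    rw [h] at this
    simpa using this
  letI : Module (S ⧸ I) M := hT.module
  letI : Field (S ⧸ I) := Ideal.Quotient.field I
  haveI : IsScalarTower S (S ⧸ I) M := hT.isScalarTower
  haveI : Module.Finite (S ⧸ I) M := Module.Finite.of_restrictScalars_finite S (S ⧸ I) M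
  have hart : IsArtinian (S ⧸ I) M := inferInstance
  -- transfer: every `S`-submodule is automatically an `S ⧸ I`-submodule
  let φ : Submodule S M → Submodule (S ⧸ I) M := fun N =>
    { carrier := N
      add_mem' := fun ha hb => N.add_mem ha hb
      zero_mem' := N.zero_mem
      smul_mem' := by
        intro c x hx
        obtain ⟨c, rfl⟩ := Ideal.Quotient.mk_surjective c
        have : (Ideal.Quotient.mk I c) • x = c • x := hT.mk_smul c x
        rw [this]
        exact N.smul_mem c hx }
  have hφ : ∀ N N' : Submodule S M, φ N ≤ φ N' ↔ N ≤ N' := fun N N' => Iff.rfl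
  let e : Submodule S M ↪o Submodule (S ⧸ I) M :=
    { toFun := φ
      inj' := by
        intro N N' hNN'
        exact le_antisymm ((hφ N N').mp hNN'.le) ((hφ N' N).mp hNN'.ge)
      map_rel_iff' := by intro N N'; exact hφ N N' }
  exact ⟨(OrderEmbedding.ltEmbedding e).wellFounded hart.wf⟩

/-- A finitely generated module over a Noetherian local ring killed by a power of the
maximal ideal is Artinian. -/
lemma artinian_of_pow_maximal_smul_top_eq_bot {S : Type u} [CommRing S] [IsNoetherianRing S]
    [IsLocalRing S] :
    ∀ (n : ℕ) (M : Type u) [AddCommGroup M] [Module S M] [Module.Finite S M],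
      (maximalIdeal S) ^ n • (⊤ : Submodule S M) = ⊥ → IsArtinian S M := by
  intro n
  induction n with
  | zero =>
    intro M _ _ _ h
    rw [pow_zero, Ideal.one_eq_top, Submodule.top_smul] at h
    have : Subsingleton M := by
      constructor
      intro a b
      have ha : a ∈ (⊥ : Submodule S M) := h ▸ Submodule.mem_top
      have hb : b ∈ (⊥ : Submodule S M) := h ▸ Submodule.mem_top
      rw [Submodule.mem_bot] at ha hb
      rw [ha, hb]
    have : Finite M := Finite.of_subsingleton
    infer_instance
  | succ n ih =>
    intro M _ _ _ h
    haveI : IsNoetherian S M := isNoetherian_of_isNoetherianRing_of_finite S M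
    set N : Submodule S M := (maximalIdeal S) • ⊤ with hN
    have hNfg : N.FG := IsNoetherian.noetherian N
    haveI : Module.Finite S N := ⟨(Submodule.fg_top N).mpr hNfg⟩
    -- N is killed by m^n
    have hmn : (maximalIdeal S) ^ n • (⊤ : Submodule S N) = ⊥ := by
      have hmap : Submodule.map N.subtype ((maximalIdeal S) ^ n • (⊤ : Submodule S N)) =
          (maximalIdeal S) ^ n • N := by
        rw [Submodule.map_smul'', Submodule.map_subtype_top]
      have h2 : (maximalIdeal S) ^ n • N = ⊥ := by
        rw [hN, ← Submodule.smul_assoc, smul_eq_mul, ← pow_succ, h]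
      rw [h2] at hmap
      have := Submodule.map_injective_of_injective N.injective_subtype
      apply this
      rw [hmap, Submodule.map_bot]
    haveI hartN : IsArtinian S N := ih N hmn
    haveI : Module.Finite S (M ⧸ N) := Module.Finite.quotient S N
    have hq : (maximalIdeal S) • (⊤ : Submodule S (M ⧸ N)) = ⊥ := by
      have : Submodule.map N.mkQ ((maximalIdeal S) • (⊤ : Submodule S M)) =
          (maximalIdeal S) • (⊤ : Submodule S (M ⧸ N)) := by
        rw [Submodule.map_smul'']
        congr 1
        rw [Submodule.map_top, Submodule.range_mkQ]
      rw [← this, ← hN]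
      ext q
      simp only [Submodule.mem_bot]
      constructor
      · rintro hq
        obtain ⟨a, ha, rfl⟩ := Submodule.mem_map.mp hq
        simpa [N.mkQ_apply, Submodule.Quotient.mk_eq_zero] using ha
      · rintro rfl
        exact Submodule.zero_mem _
    haveI hartQ : IsArtinian S (M ⧸ N) :=
      artinian_of_maximal_smul_top_eq_bot (maximalIdeal S) (M ⧸ N) hq
    exact isArtinian_of_range_eq_ker N.subtype N.mkQ
      (by rw [Submodule.range_subtype, Submodule.ker_mkQ])

/-- Core of Krull's principal ideal theorem: in a Noetherian local domain whose maximal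
ideal is the unique prime containing `w`, there is no prime strictly between `⊥` and the
maximal ideal. -/
lemma no_intermediate_prime_of_unique_prime_over {S : Type u} [CommRing S] [IsNoetherianRing S]
    [IsLocalRing S] [IsDomain S] (w : S) (hwm : w ∈ maximalIdeal S)
    (hw : ∀ q : Ideal S, q.IsPrime → w ∈ q → q = maximalIdeal S)
    (P : Ideal S) (hP : P.IsPrime) (hP0 : P ≠ ⊥) (hPm : P < maximalIdeal S) : False := by
  classical
  -- the radical of (w) is the maximal ideal
  have hrad : (Ideal.span {w} : Ideal S).radical = maximalIdeal S := by
    rw [Ideal.radical_eq_sInf]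
    apply le_antisymm
    · exact sInf_le ⟨by simpa [Ideal.span_le] using hwm, inferInstance⟩
    · intro a ha
      simp only [Ideal.mem_sInf]
      rintro J ⟨hJ1, hJ2⟩
      have : J = maximalIdeal S := hw J hJ2 (hJ1 (Ideal.subset_span rfl))
      rw [this]; exact ha
  obtain ⟨K, hK⟩ := Ideal.exists_radical_pow_le_of_fg (Ideal.span {w} : Ideal S)
    (IsNoetherian.noetherian _)
  rw [hrad] at hK
  -- symbolic powers of P
  set L := Localization.AtPrime P
  set f : S →+* L := algebraMap S L with hf
  set J : ℕ → Ideal S := fun n => Ideal.comap f (Ideal.map f (P ^ n)) with hJ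
  have memJ : ∀ (n : ℕ) (c : S), c ∈ J n ↔ ∃ v, v ∉ P ∧ v * c ∈ P ^ n := by
    intro n c
    constructor
    · intro hc
      rw [hJ] at hc
      simp only [Ideal.mem_comap] at hc
      rw [IsLocalization.mem_map_algebraMap_iff P.primeCompl L] at hc
      obtain ⟨⟨a, s⟩, ha⟩ := hc
      rw [← _root_.map_mul] at ha
      rw [IsLocalization.eq_iff_exists P.primeCompl L] at ha
      obtain ⟨v, hv⟩ := ha
      refine ⟨v * s, fun hcon => ?_, ?_⟩
      · have hmem : (v : S) * (s : S) ∈ P.primeCompl := Submonoid.mul_mem _ v.2 s.2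
        exact hmem hcon
      · have h1 : (v : S) * (c * s) = v * a := hv
        have h2 : (v : S) * (s : S) * c = (v : S) * (c * s) := by ring
        rw [h2, h1]
        exact Ideal.mul_mem_left _ _ a.2
    · rintro ⟨v, hv, hvc⟩
      rw [hJ]
      simp only [Ideal.mem_comap]
      have hunit : IsUnit (f v) := IsLocalization.map_units L (⟨v, hv⟩ : P.primeCompl)
      obtain ⟨vu, hvu⟩ := hunit
      have : f c = vu.inv * f (v * c) := by
        rw [_root_.map_mul, ← hvu, ← mul_assoc, Units.inv_eq_val_inv, Units.inv_mul, one_mul]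
      rw [this]
      exact Ideal.mul_mem_left _ _ (Ideal.mem_map_of_mem f hvc)
  -- the chain J n stabilizes modulo (w)
  have hart : IsArtinian S (S ⧸ (Ideal.span {w} : Ideal S)) := by
    apply artinian_of_pow_maximal_smul_top_eq_bot K
    rw [eq_bot_iff]
    apply Submodule.smul_le.mpr
    intro r hr mm _
    obtain ⟨mm, rfl⟩ := Submodule.Quotient.mk_surjective _ mm
    rw [Submodule.mem_bot, ← Submodule.Quotient.mk_smul, Submodule.Quotient.mk_eq_zero,
      smul_eq_mul]
    exact Ideal.mul_mem_right _ _ (hK hr)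
  haveI : IsArtinianRing (S ⧸ (Ideal.span {w} : Ideal S)) := isArtinian_of_tower S hart
  -- descending chain of images of J n stabilizes
  set g : S →+* S ⧸ (Ideal.span {w} : Ideal S) := Ideal.Quotient.mk _ with hg
  have hJanti : ∀ n, J (n + 1) ≤ J n := by
    intro n
    apply Ideal.comap_mono
    apply Ideal.map_mono
    exact Ideal.pow_le_pow_right (Nat.le_succ n)
  have hJanti' : Antitone J := antitone_nat_of_succ_le hJanti
  set F : ℕ →o (Ideal (S ⧸ (Ideal.span {w} : Ideal S)))ᵒᵈ :=
    ⟨fun n => Ideal.map g (J n), fun a b hab => Ideal.map_mono (hJanti' hab)⟩ with hF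
  obtain ⟨n, hn⟩ := IsArtinian.monotone_stabilizes F
  have hstep : J n ≤ J (n + 1) ⊔ Ideal.span {w} := by
    intro c hc
    have : g c ∈ Ideal.map g (J (n + 1)) := by
      have h1 : g c ∈ Ideal.map g (J n) := Ideal.mem_map_of_mem g hc
      have h2 : Ideal.map g (J n) = Ideal.map g (J (n + 1)) := hn (n + 1) (Nat.le_succ n)
      rwa [h2] at h1
    obtain ⟨d, hd, hdc⟩ := Ideal.mem_map_iff_of_surjective g Ideal.Quotient.mk_surjective |>.mp this
    have : c - d ∈ Ideal.span {w} := by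
      rw [← Ideal.Quotient.eq_zero_iff_mem (I := Ideal.span {w})]
      rw [map_sub, hdc, sub_self]
    have hc' : c = d + (c - d) := by ring
    rw [hc']
    exact Submodule.add_mem_sup hd this
  -- Nakayama: J n = J (n+1)
  have hwJ : ∀ c ∈ J n, ∀ e, c = e * w → e ∈ J n := by
    intro c hc e hce
    rw [memJ] at hc ⊢
    obtain ⟨v, hv, hvc⟩ := hc
    refine ⟨v * w, fun hcon => ?_, ?_⟩
    · rcases hP.mem_or_mem hcon with h | h
      · exact hv h
      · have : P = maximalIdeal S := hw P hP h
        exact absurd this (ne_of_lt hPm)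
    · have : v * w * e = v * c := by rw [hce]; ring
      rw [this]; exact hvc
  have hJsub : J n ≤ J (n + 1) ⊔ (maximalIdeal S) • (J n) := by
    intro c hc
    obtain ⟨d, hd, e, he, hde⟩ := Submodule.mem_sup.mp (hstep hc)
    obtain ⟨e', rfl⟩ := Ideal.mem_span_singleton'.mp he
    have hcdJ : c - d ∈ J n := Submodule.sub_mem _ hc (hJanti n hd)
    have he'J : e' ∈ J n := by
      apply hwJ (c - d) hcdJ e'
      rw [← hde]; ring
    have hcd : c = d + w * e' := by rw [← hde]; ring
    rw [hcd]
    refine Submodule.add_mem_sup hd ?_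
    rw [Ideal.smul_eq_mul]
    exact Ideal.mul_mem_mul hwm he'J
  have hJfg : (J n).FG := IsNoetherian.noetherian _
  have hjac : maximalIdeal S ≤ Ideal.jacobson ⊥ := by
    rw [IsLocalRing.jacobson_eq_maximalIdeal ⊥ bot_ne_top]
  have hJeq : J n = J (n + 1) :=
    le_antisymm (Submodule.le_of_le_smul_of_le_jacobson_bot hJfg hjac hJsub) (hJanti n)
  -- push to the localization and apply Nakayama there
  haveI : IsNoetherianRing L := IsLocalization.isNoetherianRing P.primeCompl L inferInstance
  have hmapeq : Ideal.map f (P ^ n) = Ideal.map f (P ^ (n + 1)) := by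
    have h1 : Ideal.map f (J n) = Ideal.map f (P ^ n) :=
      IsLocalization.map_comap P.primeCompl L (Ideal.map f (P ^ n))
    have h2 : Ideal.map f (J (n + 1)) = Ideal.map f (P ^ (n + 1)) :=
      IsLocalization.map_comap P.primeCompl L (Ideal.map f (P ^ (n + 1)))
    rw [← h1, ← h2, hJeq]
  have hNbot : Ideal.map f (P ^ n) = ⊥ := by
    apply Submodule.eq_bot_of_le_smul_of_le_jacobson_bot (Ideal.map f P) _
      (IsNoetherian.noetherian _)
    · rw [Ideal.smul_eq_mul]
      refine le_of_eq ?_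
      calc Ideal.map f (P ^ n) = Ideal.map f (P ^ (n + 1)) := hmapeq
        _ = Ideal.map f (P * P ^ n) := by rw [pow_succ, mul_comm]
        _ = Ideal.map f P * Ideal.map f (P ^ n) := Ideal.map_mul f P (P ^ n)
    · rw [IsLocalRing.jacobson_eq_maximalIdeal ⊥ bot_ne_top,
        ← Localization.AtPrime.map_eq_maximalIdeal]
  -- contradiction: a nonzero element of P becomes nilpotent-zero
  obtain ⟨s, hsP, hs0⟩ := Submodule.exists_mem_ne_zero_of_ne_bot hP0
  have hsn : f (s ^ n) = 0 := by
    have : f (s ^ n) ∈ Ideal.map f (P ^ n) :=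
      Ideal.mem_map_of_mem f (Ideal.pow_mem_pow hsP n)
    rwa [hNbot, Ideal.mem_bot] at this
  obtain ⟨v, hv⟩ := (IsLocalization.map_eq_zero_iff P.primeCompl L (s ^ n)).mp hsn
  have hvne : (v : S) ≠ 0 := fun h0 => v.2 (h0 ▸ P.zero_mem)
  have hsn0 : s ^ n = 0 := by
    rcases mul_eq_zero.mp hv with h | h
    · exact absurd h hvne
    · exact h
  rcases Nat.eq_zero_or_pos n with hn0 | hnpos
  · rw [hn0, pow_zero] at hsn0
    exact one_ne_zero hsn0
  · exact hs0 (pow_eq_zero_iff (Nat.pos_iff_ne_zero.mp hnpos) |>.mp hsn0)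

/-- Krull's principal ideal theorem, in the form we need: a prime that is minimal over
`A ⊔ (x)` cannot lie strictly above a chain `A < B` of primes. -/
lemma pit_contra {R : Type u} [CommRing R] [IsNoetherianRing R]
    {A B C : Ideal R} (hA : A.IsPrime) (hB : B.IsPrime) (hC : C.IsPrime)
    (hAB : A < B) (hBC : B < C) {x : R}
    (hmin : C ∈ (A ⊔ Ideal.span {x}).minimalPrimes) : False := by
  classical
  haveI := hA
  haveI := hC
  -- pass to the quotient domain R/A
  set Rb := R ⧸ A with hRb
  set π : R →+* Rb := Ideal.Quotient.mk A with hπ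
  have hπs : Function.Surjective π := Ideal.Quotient.mk_surjective
  haveI : IsNoetherianRing Rb := isNoetherianRing_of_surjective R Rb π hπs
  have hker : RingHom.ker π = A := Ideal.mk_ker
  have hAC : A ≤ C := le_of_lt (lt_trans hAB hBC)
  have hAB' : A ≤ B := le_of_lt hAB
  set Cb := Ideal.map π C with hCb
  set Bb := Ideal.map π B with hBb
  haveI hCbp : Cb.IsPrime := Ideal.map_isPrime_of_surjective hπs (by rw [hker]; exact hAC)
  haveI hBbp : Bb.IsPrime := Ideal.map_isPrime_of_surjective hπs (by rw [hker]; exact hAB')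
  have hcomapC : Ideal.comap π Cb = C := by
    rw [hCb, Ideal.comap_map_of_surjective π hπs, ← RingHom.ker_eq_comap_bot, hker,
      sup_eq_left.mpr hAC]
  have hcomapB : Ideal.comap π Bb = B := by
    rw [hBb, Ideal.comap_map_of_surjective π hπs, ← RingHom.ker_eq_comap_bot, hker,
      sup_eq_left.mpr hAB']
  -- localize at Cb
  set L := Localization.AtPrime Cb with hL
  set f : Rb →+* L := algebraMap Rb L with hf2
  haveI : IsDomain L := IsLocalization.isDomain_localization Cb.primeCompl_le_nonZeroDivisors
  haveI : IsNoetherianRing L := IsLocalization.isNoetherianRing Cb.primeCompl L inferInstance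
  haveI : IsLocalRing L := inferInstance
  -- the element
  set xb := π x with hxb
  have hxC : x ∈ C := hmin.1.2 (Ideal.mem_sup_right (Ideal.subset_span rfl))
  have hwm : f xb ∈ maximalIdeal L := by
    rw [← Localization.AtPrime.map_eq_maximalIdeal]
    exact Ideal.mem_map_of_mem f (Ideal.mem_map_of_mem π hxC)
  -- every prime of L containing f xb is the maximal ideal
  have hu : ∀ q : Ideal L, q.IsPrime → f xb ∈ q → q = maximalIdeal L := by
    intro q hq hxq
    haveI := hq
    -- comap to Rb then to R
    have hdisj : Ideal.comap f q ≤ Cb := by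
      intro a ha
      by_contra hcon
      have : IsUnit (f a) := IsLocalization.map_units L (⟨a, hcon⟩ : Cb.primeCompl)
      exact hq.ne_top (Ideal.eq_top_of_isUnit_mem q (Ideal.mem_comap.mp ha) this)
    have hQprime : (Ideal.comap π (Ideal.comap f q)).IsPrime := Ideal.IsPrime.comap π
    have hQle : Ideal.comap π (Ideal.comap f q) ≤ C := by
      rw [← hcomapC]; exact Ideal.comap_mono hdisj
    have hQge : A ⊔ Ideal.span {x} ≤ Ideal.comap π (Ideal.comap f q) := by
      apply sup_le
      · intro a ha
        simp only [Ideal.mem_comap]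
        have : π a = 0 := by rw [← hker] at ha; exact ha
        rw [this, map_zero]
        exact q.zero_mem
      · rw [Ideal.span_le, Set.singleton_subset_iff]
        exact hxq
    have hQeq : Ideal.comap π (Ideal.comap f q) = C :=
      le_antisymm hQle (hmin.2 ⟨hQprime, hQge⟩ hQle)
    -- conclude q = maximal
    have hcomapq : Ideal.comap f q = Cb := by
      have := congrArg (Ideal.map π) hQeq
      rwa [Ideal.map_comap_of_surjective π hπs] at this
    have h1 : Ideal.map f (Ideal.comap f q) = q := IsLocalization.map_comap Cb.primeCompl L q
    rw [hcomapq] at h1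
    rw [← h1, Localization.AtPrime.map_eq_maximalIdeal]
  -- the intermediate prime
  set P : Ideal L := Ideal.map f Bb with hPdef
  have hBbCb : Bb ≤ Cb := Ideal.map_mono (le_of_lt hBC)
  have hBbCb_disj : Disjoint (Cb.primeCompl : Set Rb) (Bb : Set Rb) := by
    rw [Set.disjoint_iff]
    rintro a ⟨ha1, ha2⟩
    exact ha1 (hBbCb ha2)
  haveI hPp : P.IsPrime := by
    have := IsLocalization.isPrime_of_isPrime_disjoint Cb.primeCompl L Bb hBbp hBbCb_disj
    exact this
  have hcomapP : Ideal.comap f P = Bb :=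
    IsLocalization.comap_map_of_isPrime_disjoint Cb.primeCompl L hBbp hBbCb_disj
  have hBb0 : Bb ≠ ⊥ := by
    obtain ⟨b, hbB, hbA⟩ := SetLike.exists_of_lt hAB
    intro h0
    have : π b ∈ Bb := Ideal.mem_map_of_mem π hbB
    rw [h0, Ideal.mem_bot, hπ, Ideal.Quotient.eq_zero_iff_mem] at this
    exact hbA this
  have hP0 : P ≠ ⊥ := by
    intro h0
    apply hBb0
    rw [← hcomapP, h0]
    apply le_antisymm
    · intro b hb
      simp only [Ideal.mem_comap, Ideal.mem_bot] at hb
      obtain ⟨v, hv⟩ := (IsLocalization.map_eq_zero_iff Cb.primeCompl L b).mp hb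
      have hvne : (v : Rb) ≠ 0 := fun hzz => v.2 (hzz ▸ Cb.zero_mem)
      rcases mul_eq_zero.mp hv with h | h
      · exact absurd h hvne
      · rw [Ideal.mem_bot]; exact h
    · exact bot_le
  have hPm : P < maximalIdeal L := by
    rw [lt_iff_le_and_ne]
    constructor
    · rw [← Localization.AtPrime.map_eq_maximalIdeal]
      exact Ideal.map_mono hBbCb
    · intro heq
      have h1 : Ideal.comap f (maximalIdeal L) = Cb :=
        IsLocalization.AtPrime.comap_maximalIdeal L Cb
      rw [heq, h1] at hcomapP
      obtain ⟨c, hcC, hcB⟩ := SetLike.exists_of_lt hBC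
      have : π c ∈ Bb := by rw [← hcomapP]; exact Ideal.mem_map_of_mem π hcC
      have : c ∈ Ideal.comap π Bb := this
      rw [hcomapB] at this
      exact hcB this
  exact no_intermediate_prime_of_unique_prime_over (f xb) hwm hu P hPp hP0 hPm

/-- `primeChain n Q P` : there is a chain of primes `Q = Q₀ < Q₁ < ⋯ < Qₙ = P`. -/
def primeChain {R : Type u} [CommRing R] : ℕ → Ideal R → Ideal R → Prop
  | 0, Q, P => Q = P ∧ P.IsPrime
  | (n + 1), Q, P => Q.IsPrime ∧ ∃ Q', Q < Q' ∧ primeChain n Q' P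

lemma primeChain_isPrime {R : Type u} [CommRing R] :
    ∀ {n : ℕ} {Q P : Ideal R}, primeChain n Q P → Q.IsPrime := by
  intro n Q P h
  cases n with
  | zero => exact h.1 ▸ h.2
  | succ n => exact h.1

/-- Chain bending using Krull's principal ideal theorem: given a chain of length `n+1`
from `Q` up to `P` and an element `x ∈ P`, there is a chain of length `n` up to `P` whose
bottom contains both `Q` and `x`. -/
lemma primeChain_bend {R : Type u} [CommRing R] [IsNoetherianRing R] (x : R) :
    ∀ (n : ℕ) (Q P : Ideal R), primeChain (n + 1) Q P → x ∈ P →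
      ∃ Q', Q ⊔ Ideal.span {x} ≤ Q' ∧ primeChain n Q' P := by
  intro n
  induction n with
  | zero =>
    rintro Q P ⟨hQ, Q1, hQQ1, hQ1P, hP⟩ hx
    exact ⟨P, sup_le (le_of_lt (hQ1P ▸ hQQ1)) (by rwa [Ideal.span_le, Set.singleton_subset_iff]),
      rfl, hP⟩
  | succ n ih =>
    rintro Q P ⟨hQ, Q1, hQQ1, hchain⟩ hx
    by_cases hxQ1 : x ∈ Q1
    · exact ⟨Q1, sup_le (le_of_lt hQQ1)
        (by rwa [Ideal.span_le, Set.singleton_subset_iff]), hchain⟩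
    · obtain ⟨Q'', hQ''ge, hQ''chain⟩ := ih Q1 P hchain hx
      haveI hQ''p : Q''.IsPrime := primeChain_isPrime hQ''chain
      have hQ1Q'' : Q1 < Q'' := lt_of_le_of_ne (le_trans le_sup_left hQ''ge)
        (fun h => hxQ1 (h ▸ hQ''ge (Ideal.mem_sup_right (Ideal.subset_span rfl))))
      have hle : Q ⊔ Ideal.span {x} ≤ Q'' :=
        sup_le (le_trans (le_of_lt hQQ1) (le_of_lt hQ1Q''))
          (le_trans le_sup_right hQ''ge)
      obtain ⟨q, hqmin, hqle⟩ := Ideal.exists_minimalPrimes_le hle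
      haveI hqp : q.IsPrime := hqmin.1.1
      have hqQ'' : q ≠ Q'' := by
        intro heq
        exact pit_contra hQ (primeChain_isPrime hchain) hQ''p hQQ1 hQ1Q'' (heq ▸ hqmin)
      exact ⟨q, hqmin.1.2, hqp, Q'', lt_of_le_of_ne hqle hqQ'', hQ''chain⟩

/-- In a Noetherian local domain whose maximal ideal is generated by `τ, υ`, the relation
`τυ ∈ (τ², υ²)` forbids a chain `⊥ < P < m`. -/
lemma no_chain_of_quadratic_relation {S : Type u} [CommRing S] [IsNoetherianRing S]
    [IsLocalRing S] [IsDomain S] (τ υ : S) (hm : maximalIdeal S = Ideal.span {τ, υ})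
    (htu : τ * υ ∈ Ideal.span ({τ ^ 2, υ ^ 2} : Set S))
    (P : Ideal S) (hP : P.IsPrime) (hP0 : P ≠ ⊥) (hPm : P < maximalIdeal S) : False := by
  classical
  have hτm : τ ∈ maximalIdeal S := by
    rw [hm]; exact Ideal.subset_span (by simp)
  have hυm : υ ∈ maximalIdeal S := by
    rw [hm]; exact Ideal.subset_span (by simp)
  -- an escape case finishes the proof
  have escape : ∀ w w' : S, maximalIdeal S = Ideal.span {w, w'} →
      (∃ k : ℕ, w ^ (k + 1) ∈ Ideal.span ({w'} : Set S)) → False := by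
    rintro w w' hww' ⟨k, hk⟩
    have hw'm : w' ∈ maximalIdeal S := by
      rw [hww']; exact Ideal.subset_span (by simp)
    apply no_intermediate_prime_of_unique_prime_over w' hw'm _ P hP hP0 hPm
    intro q hq hw'q
    have hwq : w ∈ q := by
      have : w ^ (k + 1) ∈ q := by
        have : Ideal.span ({w'} : Set S) ≤ q := by
          rwa [Ideal.span_le, Set.singleton_subset_iff]
        exact this hk
      exact hq.mem_of_pow_mem _ this
    apply le_antisymm (le_maximalIdeal hq.ne_top)
    rw [hww', Ideal.span_le]
    intro a ha
    rcases ha with rfl | ha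
    · exact hwq
    · simp only [Set.mem_singleton_iff] at ha
      rw [ha]; exact hw'q
  -- descent step
  have step : ∀ n : ℕ, τ * υ ∈ Ideal.span ({τ ^ (n + 2), υ ^ (n + 2)} : Set S) →
      (∃ k : ℕ, τ ^ (k + 1) ∈ Ideal.span ({υ} : Set S)) ∨
      (∃ k : ℕ, υ ^ (k + 1) ∈ Ideal.span ({τ} : Set S)) ∨
      τ * υ ∈ Ideal.span ({τ ^ (n + 3), υ ^ (n + 3)} : Set S) := by
    intro n hmem
    obtain ⟨a, b, hab⟩ := Ideal.mem_span_pair.mp hmem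
    by_cases ham : a ∈ maximalIdeal S
    · by_cases hbm : b ∈ maximalIdeal S
      · -- both coefficients in m : descend
        right; right
        rw [hm, Ideal.mem_span_pair] at ham hbm
        obtain ⟨a₁, a₂, ha⟩ := ham
        obtain ⟨b₁, b₂, hb⟩ := hbm
        set δ := a₂ * τ ^ (n + 1) + b₁ * υ ^ (n + 1) with hδ
        have hδm : δ ∈ maximalIdeal S := by
          apply Ideal.add_mem
          · exact Ideal.mul_mem_left _ _ (Ideal.pow_mem_of_mem _ hτm _ (Nat.succ_pos n))
          · exact Ideal.mul_mem_left _ _ (Ideal.pow_mem_of_mem _ hυm _ (Nat.succ_pos n))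
        have hε : IsUnit (1 - δ) := by
          by_contra hcon
          have : (1 : S) - δ ∈ maximalIdeal S := by
            rw [IsLocalRing.mem_maximalIdeal]; exact hcon
          have h1 : (1 : S) ∈ maximalIdeal S := by
            have := Ideal.add_mem _ this hδm
            simpa using this
          exact (maximalIdeal.isMaximal S).ne_top ((Ideal.eq_top_iff_one _).mpr h1)
        have hkey : (1 - δ) * (τ * υ) = a₁ * τ ^ (n + 3) + b₂ * υ ^ (n + 3) := by
          rw [hδ]
          linear_combination (-(τ ^ (n + 1) * τ)) * ha + (-(υ ^ (n + 1) * υ)) * hb - hab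
        obtain ⟨e, he⟩ := hε
        rw [Ideal.mem_span_pair]
        refine ⟨(e⁻¹ : Sˣ) * a₁, (e⁻¹ : Sˣ) * b₂, ?_⟩
        have : ((e⁻¹ : Sˣ) : S) * ((1 - δ) * (τ * υ)) = τ * υ := by
          rw [← he, ← mul_assoc, Units.inv_mul, one_mul]
        calc ((e⁻¹ : Sˣ) : S) * a₁ * τ ^ (n + 3) + ((e⁻¹ : Sˣ) : S) * b₂ * υ ^ (n + 3)
            = ((e⁻¹ : Sˣ) : S) * (a₁ * τ ^ (n + 3) + b₂ * υ ^ (n + 3)) := by ring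
          _ = ((e⁻¹ : Sˣ) : S) * ((1 - δ) * (τ * υ)) := by rw [hkey]
          _ = τ * υ := this
      · -- b is a unit : υ^(n+2) ∈ (τ)
        right; left
        have hbu : IsUnit b := by
          rw [IsLocalRing.mem_maximalIdeal, mem_nonunits_iff, not_not] at hbm
          exact hbm
        obtain ⟨ub, hub⟩ := hbu
        refine ⟨n + 1, Ideal.mem_span_singleton'.mpr ⟨((ub⁻¹ : Sˣ) : S) * (υ - a * τ ^ (n + 1)), ?_⟩⟩
        have h1 : b * υ ^ (n + 2) = (υ - a * τ ^ (n + 1)) * τ := by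
          linear_combination hab
        calc ((ub⁻¹ : Sˣ) : S) * (υ - a * τ ^ (n + 1)) * τ
            = ((ub⁻¹ : Sˣ) : S) * ((υ - a * τ ^ (n + 1)) * τ) := by ring
          _ = ((ub⁻¹ : Sˣ) : S) * (b * υ ^ (n + 2)) := by rw [← h1]
          _ = (((ub⁻¹ : Sˣ) : S) * b) * υ ^ (n + 2) := by ring
          _ = υ ^ (n + 2) := by rw [← hub, Units.inv_mul, one_mul]
    · -- a is a unit : τ^(n+2) ∈ (υ)
      left
      have hau : IsUnit a := by
        rw [IsLocalRing.mem_maximalIdeal, mem_nonunits_iff, not_not] at ham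
        exact ham
      obtain ⟨ua, hua⟩ := hau
      refine ⟨n + 1, Ideal.mem_span_singleton'.mpr ⟨((ua⁻¹ : Sˣ) : S) * (τ - b * υ ^ (n + 1)), ?_⟩⟩
      have h1 : a * τ ^ (n + 2) = (τ - b * υ ^ (n + 1)) * υ := by
        linear_combination hab
      calc ((ua⁻¹ : Sˣ) : S) * (τ - b * υ ^ (n + 1)) * υ
          = ((ua⁻¹ : Sˣ) : S) * ((τ - b * υ ^ (n + 1)) * υ) := by ring
        _ = ((ua⁻¹ : Sˣ) : S) * (a * τ ^ (n + 2)) := by rw [← h1]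
        _ = (((ua⁻¹ : Sˣ) : S) * a) * τ ^ (n + 2) := by ring
        _ = τ ^ (n + 2) := by rw [← hua, Units.inv_mul, one_mul]
  -- iterate the descent
  have iter : ∀ n : ℕ,
      (∃ k : ℕ, τ ^ (k + 1) ∈ Ideal.span ({υ} : Set S)) ∨
      (∃ k : ℕ, υ ^ (k + 1) ∈ Ideal.span ({τ} : Set S)) ∨
      τ * υ ∈ Ideal.span ({τ ^ (n + 2), υ ^ (n + 2)} : Set S) := by
    intro n
    induction n with
    | zero => exact Or.inr (Or.inr htu)
    | succ n ih =>
      rcases ih with h | h | h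
      · exact Or.inl h
      · exact Or.inr (Or.inl h)
      · rcases step n h with h' | h' | h'
        · exact Or.inl h'
        · exact Or.inr (Or.inl h')
        · exact Or.inr (Or.inr h')
  -- three final cases
  rcases Classical.em (∃ k : ℕ, τ ^ (k + 1) ∈ Ideal.span ({υ} : Set S)) with hB | hB
  · exact escape τ υ hm hB
  rcases Classical.em (∃ k : ℕ, υ ^ (k + 1) ∈ Ideal.span ({τ} : Set S)) with hC | hC
  · refine escape υ τ ?_ hC
    rw [hm, Set.pair_comm]
  have hall : ∀ n : ℕ, τ * υ ∈ Ideal.span ({τ ^ (n + 2), υ ^ (n + 2)} : Set S) := by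
    intro n
    rcases iter n with h | h | h
    · exact absurd h hB
    · exact absurd h hC
    · exact h
  have hbot : τ * υ ∈ (⊥ : Ideal S) := by
    rw [← Ideal.iInf_pow_eq_bot_of_isDomain (maximalIdeal S) (maximalIdeal.isMaximal S).ne_top]
    rw [Submodule.mem_iInf]
    intro k
    have h1 : τ * υ ∈ Ideal.span ({τ ^ (k + 2), υ ^ (k + 2)} : Set S) := hall k
    have h2 : Ideal.span ({τ ^ (k + 2), υ ^ (k + 2)} : Set S) ≤ maximalIdeal S ^ (k + 2) := by
      rw [Ideal.span_le]
      rintro w (rfl | hw)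
      · exact Ideal.pow_mem_pow hτm _
      · simp only [Set.mem_singleton_iff] at hw
        rw [hw]
        exact Ideal.pow_mem_pow hυm _
    have h3 : maximalIdeal S ^ (k + 2) ≤ maximalIdeal S ^ k :=
      Ideal.pow_le_pow_right (by omega)
    exact h3 (h2 h1)
  rw [Ideal.mem_bot] at hbot
  rcases mul_eq_zero.mp hbot with h0 | h0
  · apply hB
    exact ⟨0, by rw [pow_one, h0]; exact Ideal.zero_mem _⟩
  · apply hC
    exact ⟨0, by rw [pow_one, h0]; exact Ideal.zero_mem _⟩

/-- The key non-membership: in a Noetherian local ring of Krull dimension 5 whose maximal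
ideal is generated by `x, y, z, t, u`, we have `t*u ∉ (x, y, z, t², u²)`. -/
lemma tu_not_mem_big {R : Type u} [CommRing R] [IsLocalRing R] [IsNoetherianRing R]
    (hdim : ringKrullDim R = 5) (x y z t u : R)
    (hgen : Ideal.span {x, y, z, t, u} = maximalIdeal R) :
    t * u ∉ Ideal.span ({x, y, z, t ^ 2, u ^ 2} : Set R) := by
  classical
  intro htu
  -- extract a chain of primes of length 5
  have hex : ∃ p : LTSeries (PrimeSpectrum R), 5 ≤ p.length := by
    by_contra hcon
    push_neg at hcon
    have : ringKrullDim R ≤ 4 := by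
      rw [ringKrullDim, Order.krullDim_eq_iSup_length]
      have : (⨆ (p : LTSeries (PrimeSpectrum R)), (p.length : ℕ∞)) ≤ (4 : ℕ∞) := by
        apply iSup_le
        intro p
        exact Nat.cast_le.mpr (Nat.lt_succ_iff.mp (hcon p))
      exact (WithBot.coe_le_coe.mpr this).trans_eq (by norm_cast)
    rw [hdim] at this
    norm_num at this
  obtain ⟨p, hp⟩ := hex
  set q : Fin 6 → Ideal R := fun i => (p.toFun ⟨(i : ℕ), by omega⟩).asIdeal with hq
  have hqmono : ∀ i j : Fin 6, i < j → q i < q j := by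
    intro i j hij
    rw [hq]
    simp only
    rw [PrimeSpectrum.asIdeal_lt_asIdeal]
    apply p.strictMono
    simp only [Fin.mk_lt_mk]
    exact_mod_cast hij
  have hqprime : ∀ i : Fin 6, (q i).IsPrime := fun i => (p.toFun _).isPrime
  -- chain of length 5 ending at the maximal ideal
  have hq45 : q 4 < maximalIdeal R :=
    lt_of_lt_of_le (hqmono 4 5 (by decide))
      (le_maximalIdeal (hqprime 5).ne_top)
  have hmax_prime : (maximalIdeal R).IsPrime := (maximalIdeal.isMaximal R).isPrime
  have hchain : primeChain 5 (q 0) (maximalIdeal R) := by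
    exact ⟨hqprime 0, q 1, hqmono 0 1 (by decide),
      hqprime 1, q 2, hqmono 1 2 (by decide),
      hqprime 2, q 3, hqmono 2 3 (by decide),
      hqprime 3, q 4, hqmono 3 4 (by decide),
      hqprime 4, maximalIdeal R, hq45, rfl, hmax_prime⟩
  have hxm : x ∈ maximalIdeal R := hgen ▸ Ideal.subset_span (by simp)
  have hym : y ∈ maximalIdeal R := hgen ▸ Ideal.subset_span (by simp)
  have hzm : z ∈ maximalIdeal R := hgen ▸ Ideal.subset_span (by simp)
  obtain ⟨p1, hp1, c1⟩ := primeChain_bend x 4 (q 0) (maximalIdeal R) hchain hxm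
  obtain ⟨p2, hp2, c2⟩ := primeChain_bend y 3 p1 (maximalIdeal R) c1 hym
  obtain ⟨p3, hp3, c3⟩ := primeChain_bend z 2 p2 (maximalIdeal R) c2 hzm
  have hxp3 : x ∈ p3 := hp3 (Ideal.mem_sup_left (hp2 (Ideal.mem_sup_left
    (hp1 (Ideal.mem_sup_right (Ideal.subset_span rfl))))))
  have hyp3 : y ∈ p3 := hp3 (Ideal.mem_sup_left (hp2 (Ideal.mem_sup_right
    (Ideal.subset_span rfl))))
  have hzp3 : z ∈ p3 := hp3 (Ideal.mem_sup_right (Ideal.subset_span rfl))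
  obtain ⟨hp3prime, B, hp3B, hBprime, B', hBB', hB'eq, _⟩ := c3
  rw [hB'eq] at hBB'
  haveI := hp3prime
  have hp3m : p3 ≤ maximalIdeal R := le_of_lt (lt_trans hp3B hBB')
  -- pass to the quotient
  set S := R ⧸ p3 with hS
  set π : R →+* S := Ideal.Quotient.mk p3 with hπ
  have hπs : Function.Surjective π := Ideal.Quotient.mk_surjective
  haveI : Nontrivial S := Ideal.Quotient.nontrivial_iff.mpr hp3prime.ne_top
  haveI : IsLocalRing S := IsLocalRing.of_surjective' π hπs
  haveI : IsNoetherianRing S := isNoetherianRing_of_surjective R S π hπs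
  haveI : IsDomain S := Ideal.Quotient.isDomain p3
  have hker : RingHom.ker π = p3 := Ideal.mk_ker
  -- the maximal ideal of S is the image of the maximal ideal of R
  have hmS : maximalIdeal S = Ideal.map π (maximalIdeal R) := by
    apply le_antisymm
    · intro c hc
      obtain ⟨a, rfl⟩ := hπs c
      by_cases ham : a ∈ maximalIdeal R
      · exact Ideal.mem_map_of_mem π ham
      · exfalso
        have : IsUnit a := by
          by_contra hna
          exact ham ((IsLocalRing.mem_maximalIdeal a).mpr hna)
        exact (IsLocalRing.mem_maximalIdeal (π a)).mp hc (this.map π)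
    · intro c hc
      obtain ⟨a, ham, rfl⟩ := Ideal.mem_map_iff_of_surjective π hπs |>.mp hc
      rw [IsLocalRing.mem_maximalIdeal, mem_nonunits_iff]
      intro hunit
      obtain ⟨v, hv⟩ := hunit
      obtain ⟨b, hb⟩ := hπs ((v⁻¹ : Sˣ) : S)
      have h1 : π (a * b) = 1 := by
        rw [_root_.map_mul, ← hv, hb, Units.mul_inv]
      have h2 : a * b - 1 ∈ p3 := by
        rw [← Ideal.Quotient.eq_zero_iff_mem, ← hπ, map_sub, h1, map_one, sub_self]
      have h3 : (1 : R) ∈ maximalIdeal R := by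
        have : (1 : R) = a * b - (a * b - 1) := by ring
        rw [this]
        exact Submodule.sub_mem _ (Ideal.mul_mem_right _ _ ham) (hp3m h2)
      exact (maximalIdeal.isMaximal R).ne_top ((Ideal.eq_top_iff_one _).mpr h3)
  have hπx : π x = 0 := Ideal.Quotient.eq_zero_iff_mem.mpr hxp3
  have hπy : π y = 0 := Ideal.Quotient.eq_zero_iff_mem.mpr hyp3
  have hπz : π z = 0 := Ideal.Quotient.eq_zero_iff_mem.mpr hzp3
  have hmS2 : maximalIdeal S = Ideal.span ({π t, π u} : Set S) := by
    rw [hmS, ← hgen, Ideal.map_span, Set.image_insert_eq, Set.image_insert_eq,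
      Set.image_insert_eq, Set.image_insert_eq, Set.image_singleton, hπx, hπy, hπz]
    show Submodule.span S ({0, 0, 0, π t, π u} : Set S) = Submodule.span S {π t, π u}
    rw [Submodule.span_insert_zero, Submodule.span_insert_zero, Submodule.span_insert_zero]
  -- the quadratic relation in S
  have htuS : π t * π u ∈ Ideal.span ({π t ^ 2, π u ^ 2} : Set S) := by
    have h1 : π (t * u) ∈ Ideal.map π (Ideal.span ({x, y, z, t ^ 2, u ^ 2} : Set R)) :=
      Ideal.mem_map_of_mem π htu
    rw [Ideal.map_span, Set.image_insert_eq, Set.image_insert_eq, Set.image_insert_eq,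
      Set.image_insert_eq, Set.image_singleton, hπx, hπy, hπz] at h1
    rw [show (Ideal.span ({0, 0, 0, π (t ^ 2), π (u ^ 2)} : Set S)) =
        Submodule.span S ({0, 0, 0, π (t ^ 2), π (u ^ 2)} : Set S) from rfl,
      Submodule.span_insert_zero, Submodule.span_insert_zero, Submodule.span_insert_zero]
      at h1
    rw [_root_.map_mul, map_pow, map_pow] at h1
    exact h1
  -- the intermediate prime
  set P' : Ideal S := Ideal.map π B with hP'
  haveI hP'p : P'.IsPrime := Ideal.map_isPrime_of_surjective hπs
    (by rw [hker]; exact le_of_lt hp3B)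
  have hP'0 : P' ≠ ⊥ := by
    obtain ⟨b, hbB, hbp3⟩ := SetLike.exists_of_lt hp3B
    intro h0
    have : π b ∈ P' := Ideal.mem_map_of_mem π hbB
    rw [h0, Ideal.mem_bot, hπ, Ideal.Quotient.eq_zero_iff_mem] at this
    exact hbp3 this
  have hP'm : P' < maximalIdeal S := by
    rw [lt_iff_le_and_ne]
    constructor
    · rw [hmS]
      exact Ideal.map_mono (le_of_lt hBB')
    · intro heq
      obtain ⟨w, hwm, hwB⟩ := SetLike.exists_of_lt hBB'
      have hw1 : π w ∈ maximalIdeal S := by rw [hmS]; exact Ideal.mem_map_of_mem π hwm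
      rw [← heq, hP'] at hw1
      obtain ⟨b, hbB, hbw⟩ := Ideal.mem_map_iff_of_surjective π hπs |>.mp hw1
      have : w - b ∈ p3 := by
        rw [← Ideal.Quotient.eq_zero_iff_mem, ← hπ, _root_.map_sub, hbw, sub_self]
      have : w ∈ B := by
        have hw : w = b + (w - b) := by ring
        rw [hw]
        exact Submodule.add_mem _ hbB (le_of_lt hp3B this)
      exact hwB this
  exact no_chain_of_quadratic_relation (π t) (π u) hmS2 htuS P' hP'p hP'0 hP'm

/-- In a regular local ring of dimension `5` with regular system of parameters
`x, y, z, t, u`, with `I = (f₁, …, f₉)` and `H = (f₁, …, f₇, f₉)`, one has `f₈ ∉ H`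
while `f₈² ∈ H·I`; hence `H : f₈` is proper, `HI : f₈² = R`, and
`H : f₈` is strictly contained in `HI : f₈²`. -/
theorem colon_strict_mono_of_f8
    (R : Type u) [CommRing R] [IsLocalRing R]
    (hreg : IsRegularLocalRing' R) (hdim : ringKrullDim R = 5)
    (x y z t u : R)
    (hgen : Ideal.span {x, y, z, t, u} = IsLocalRing.maximalIdeal R)
    (I H : Ideal R)
    (hI : I = Ideal.span {y ^ 2 - x * z, y * z - x * t, z ^ 2 - y * t, y * t - x * u,
      z * t - y * u, t ^ 2 - z * u, z * u - x ^ 3, t * u - x ^ 2 * y, u ^ 2 - x ^ 2 * z})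
    (hH : H = Ideal.span {y ^ 2 - x * z, y * z - x * t, z ^ 2 - y * t, y * t - x * u,
      z * t - y * u, t ^ 2 - z * u, z * u - x ^ 3, u ^ 2 - x ^ 2 * z}) :
    (t * u - x ^ 2 * y) ∉ H ∧
    (t * u - x ^ 2 * y) ^ 2 ∈ H * I ∧
    Submodule.colon H (Ideal.span {t * u - x ^ 2 * y}) ≠ ⊤ ∧
    Submodule.colon (H * I) (Ideal.span {(t * u - x ^ 2 * y) ^ 2}) = ⊤ ∧
    Submodule.colon H (Ideal.span {t * u - x ^ 2 * y}) <
      Submodule.colon (H * I) (Ideal.span {(t * u - x ^ 2 * y) ^ 2}) := by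
  haveI hnoeth : IsNoetherianRing R := hreg.1
  -- Part 1 : f₈ ∉ H
  have h1 : (t * u - x ^ 2 * y) ∉ H := by
    intro hmem
    set J : Ideal R := Ideal.span ({x, y, z, t ^ 2, u ^ 2} : Set R) with hJ
    have hxJ : x ∈ J := Ideal.subset_span (by simp)
    have hyJ : y ∈ J := Ideal.subset_span (by simp)
    have hzJ : z ∈ J := Ideal.subset_span (by simp)
    have htJ : t ^ 2 ∈ J := Ideal.subset_span (by simp)
    have huJ : u ^ 2 ∈ J := Ideal.subset_span (by simp)
    have hHle : H ≤ J := by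
      rw [hH, Ideal.span_le]
      rintro g (rfl | rfl | rfl | rfl | rfl | rfl | rfl | hg)
      · exact sub_mem (Ideal.pow_mem_of_mem _ hyJ _ (by norm_num))
          (Ideal.mul_mem_left _ _ hzJ)
      · exact sub_mem (Ideal.mul_mem_left _ _ hzJ) (Ideal.mul_mem_right _ _ hxJ)
      · exact sub_mem (Ideal.pow_mem_of_mem _ hzJ _ (by norm_num))
          (Ideal.mul_mem_right _ _ hyJ)
      · exact sub_mem (Ideal.mul_mem_right _ _ hyJ) (Ideal.mul_mem_right _ _ hxJ)
      · exact sub_mem (Ideal.mul_mem_right _ _ hzJ) (Ideal.mul_mem_right _ _ hyJ)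
      · exact sub_mem htJ (Ideal.mul_mem_right _ _ hzJ)
      · exact sub_mem (Ideal.mul_mem_right _ _ hzJ)
          (Ideal.pow_mem_of_mem _ hxJ _ (by norm_num))
      · simp only [Set.mem_singleton_iff] at hg
        rw [hg]
        exact sub_mem huJ (Ideal.mul_mem_left _ _ hzJ)
    have htu : t * u ∈ J := by
      have : t * u = (t * u - x ^ 2 * y) + x ^ 2 * y := by ring
      rw [this]
      exact add_mem (hHle hmem) (Ideal.mul_mem_left _ _ hyJ)
    exact tu_not_mem_big hdim x y z t u hgen htu
  -- Part 2 : f₈² ∈ H·I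
  have h2 : (t * u - x ^ 2 * y) ^ 2 ∈ H * I := by
    have memH : ∀ g ∈ ({y ^ 2 - x * z, y * z - x * t, z ^ 2 - y * t, y * t - x * u,
        z * t - y * u, t ^ 2 - z * u, z * u - x ^ 3, u ^ 2 - x ^ 2 * z} : Set R), g ∈ H := by
      intro g hg
      rw [hH]
      exact Ideal.subset_span hg
    have memI : ∀ g ∈ ({y ^ 2 - x * z, y * z - x * t, z ^ 2 - y * t, y * t - x * u,
        z * t - y * u, t ^ 2 - z * u, z * u - x ^ 3, t * u - x ^ 2 * y, u ^ 2 - x ^ 2 * z} :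
        Set R), g ∈ I := by
      intro g hg
      rw [hI]
      exact Ideal.subset_span hg
    have m1 : (u ^ 2 - x ^ 2 * z) * (t ^ 2 - z * u) ∈ H * I :=
      Ideal.mul_mem_mul (memH _ (by simp)) (memI _ (by simp))
    have m2 : (u ^ 2 - x ^ 2 * z) * (z * u - x ^ 3) ∈ H * I :=
      Ideal.mul_mem_mul (memH _ (by simp)) (memI _ (by simp))
    have m3 : (z ^ 2 - y * t) * (y * t - x * u) ∈ H * I :=
      Ideal.mul_mem_mul (memH _ (by simp)) (memI _ (by simp))
    have m4 : (y * t - x * u) * (y * t - x * u) ∈ H * I :=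
      Ideal.mul_mem_mul (memH _ (by simp)) (memI _ (by simp))
    have m5 : (y * z - x * t) * (z * t - y * u) ∈ H * I :=
      Ideal.mul_mem_mul (memH _ (by simp)) (memI _ (by simp))
    have m6 : (y ^ 2 - x * z) * (z * u - x ^ 3) ∈ H * I :=
      Ideal.mul_mem_mul (memH _ (by simp)) (memI _ (by simp))
    have key : (t * u - x ^ 2 * y) ^ 2 =
        ((((u ^ 2 - x ^ 2 * z) * (t ^ 2 - z * u) + (u ^ 2 - x ^ 2 * z) * (z * u - x ^ 3))
          + x * ((z ^ 2 - y * t) * (y * t - x * u)))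
          + x * ((y * t - x * u) * (y * t - x * u)))
          - x * ((y * z - x * t) * (z * t - y * u))
          - x * ((y ^ 2 - x * z) * (z * u - x ^ 3)) := by
      ring
    rw [key]
    exact sub_mem (sub_mem (add_mem (add_mem (add_mem m1 m2)
      (Ideal.mul_mem_left _ x m3)) (Ideal.mul_mem_left _ x m4))
      (Ideal.mul_mem_left _ x m5)) (Ideal.mul_mem_left _ x m6)
  -- Part 3 : the colon ideal H : f₈ is proper
  have h3 : Submodule.colon H (Ideal.span {t * u - x ^ 2 * y}) ≠ ⊤ := by
    intro heq
    apply h1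
    have h1mem : (1 : R) ∈ Submodule.colon H (Ideal.span {t * u - x ^ 2 * y}) := by
      rw [heq]; exact Submodule.mem_top
    have := Submodule.mem_colon.mp h1mem (t * u - x ^ 2 * y)
      (Ideal.subset_span rfl)
    simpa using this
  -- Part 4 : the colon ideal HI : f₈² is everything
  have h4 : Submodule.colon (H * I) (Ideal.span {(t * u - x ^ 2 * y) ^ 2}) = ⊤ := by
    rw [eq_top_iff]
    intro r _
    rw [Submodule.mem_colon]
    intro p hp
    obtain ⟨a, rfl⟩ := Ideal.mem_span_singleton'.mp hp
    rw [smul_eq_mul]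
    exact Ideal.mul_mem_left _ _ (Ideal.mul_mem_left _ _ h2)
  -- Part 5 : strict inclusion
  have h5 : Submodule.colon H (Ideal.span {t * u - x ^ 2 * y}) <
      Submodule.colon (H * I) (Ideal.span {(t * u - x ^ 2 * y) ^ 2}) := by
    have hle : Submodule.colon H (Ideal.span {t * u - x ^ 2 * y}) ≤
        Submodule.colon (H * I) (Ideal.span {(t * u - x ^ 2 * y) ^ 2}) := by
      intro r hr
      have hrf : r * (t * u - x ^ 2 * y) ∈ H := by
        have := Submodule.mem_colon.mp hr (t * u - x ^ 2 * y) (Ideal.subset_span rfl)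
        simpa using this
      rw [Submodule.mem_colon]
      intro p hp
      obtain ⟨a, rfl⟩ := Ideal.mem_span_singleton'.mp hp
      have hf8I : (t * u - x ^ 2 * y) ∈ I := by
        rw [hI]; exact Ideal.subset_span (by simp)
      have : (r * (t * u - x ^ 2 * y)) * (t * u - x ^ 2 * y) ∈ H * I :=
        Ideal.mul_mem_mul hrf hf8I
      have heq : r • (a * (t * u - x ^ 2 * y) ^ 2) =
          a * ((r * (t * u - x ^ 2 * y)) * (t * u - x ^ 2 * y)) := by
        rw [smul_eq_mul]; ring
      rw [heq]
      exact Ideal.mul_mem_left _ _ this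
    exact lt_of_le_of_ne hle (by rw [h4]; exact h3)
  exact ⟨h1, h2, h3, h4, h5⟩
end

section
/- Let (R, m, k) be a complete regular local ring of Krull dimension 5, let x, y, z, t, u be a regular system of parameters of R, let I be the ideal generated by f₁ = y² − xz, f₂ = yz − xt, f₃ = z² − yt, f₄ = yt − xu, f₅ = zt − yu, f₆ = t² − zu, f₇ = zu − x³, f₈ = tu − x²y, f₉ = u² − x²z, let p be an associated prime of R/I, let D = R/p, let V be the integral closure of D in its field of fractions K (a discrete valuation ring, finite as a D-module), and let ν be the corresponding valuation on K. Then there exists an integer n ≥ 1 such that (ν(x), ν(y), ν(z), ν(t), ν(u)) = (6n, 7n, 8n, 9n, 10n), where x, y, z, t, u denote the images in D of the parameters. -/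
universe u

open Polynomial in
/-- If the image of `d` in the integral closure of `D` in its fraction field is a unit,
then `d` is already a unit in `D`. -/
lemma isUnit_of_isUnit_map_integralClosure
    {D K : Type*} [CommRing D] [IsDomain D] [Field K] [Algebra D K] [IsFractionRing D K]
    {d : D} (h : IsUnit (algebraMap D (integralClosure D K) d)) : IsUnit d := by
  obtain ⟨v, hv⟩ := h.exists_right_inv
  have ha_inv : algebraMap D K d * (v : K) = 1 := by
    have := congrArg (Subtype.val) hv
    simpa using this
  letI : Invertible (v : K) :=
    (Units.mkOfMulEqOne (v : K) _ <| mul_comm _ (v : K) ▸ ha_inv).invertible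
  obtain ⟨p, p_monic, hp⟩ := v.2
  refine IsUnit.of_mul_eq_one (a := d) (-p.reverse.divX.eval d) ?_
  nth_rewrite 1 [mul_neg, ← eval_X (x := d), ← eval_mul, ← p_monic, ← coeff_zero_reverse,
    ← add_eq_zero_iff_neg_eq, ← eval_C (a := p.reverse.coeff 0), ← eval_add, X_mul_divX_add,
    ← (injective_iff_map_eq_zero' _).mp (IsFractionRing.injective D K),
    ← aeval_algebraMap_apply_eq_algebraMap_eval]
  rwa [← eval₂_reverse_eq_zero_iff] at hp

set_option maxHeartbeats 1000000 in
/-- In a complete regular local ring of dimension `5` with regular system of parameters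
`x, y, z, t, u` and `I = (f₁, …, f₉)`, let `p` be an associated prime of `R ⧸ I`,
`D = R ⧸ p`, `V` the integral closure of `D` in its fraction field (a discrete valuation
ring) and `ν` the corresponding valuation. Then there is `n ≥ 1` with
`(ν x, ν y, ν z, ν t, ν u) = (6n, 7n, 8n, 9n, 10n)`, where `x, …, u` denote the images
in `D` of the parameters. -/
theorem valuation_of_parameters_on_associated_prime
    (R : Type u) [CommRing R] [IsLocalRing R]
    [IsAdicComplete (IsLocalRing.maximalIdeal R) R]
    (hreg : IsRegularLocalRing' R) (hdim : ringKrullDim R = 5)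
    (x y z t u : R)
    (hgen : Ideal.span {x, y, z, t, u} = IsLocalRing.maximalIdeal R)
    (I : Ideal R)
    (hI : I = Ideal.span {y ^ 2 - x * z, y * z - x * t, z ^ 2 - y * t, y * t - x * u,
      z * t - y * u, t ^ 2 - z * u, z * u - x ^ 3, t * u - x ^ 2 * y, u ^ 2 - x ^ 2 * z})
    (p : Ideal R) (hp : p ∈ associatedPrimes R (R ⧸ I)) :
    haveI : p.IsPrime := hp.isPrime
    ∀ _ : IsDiscreteValuationRing (integralClosure (R ⧸ p) (FractionRing (R ⧸ p))),
      ∃ n : ℕ, 1 ≤ n ∧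
        IsDiscreteValuationRing.addVal (integralClosure (R ⧸ p) (FractionRing (R ⧸ p)))
          (algebraMap (R ⧸ p) (integralClosure (R ⧸ p) (FractionRing (R ⧸ p)))
            (Ideal.Quotient.mk p x)) = (6 * n : ℕ) ∧
        IsDiscreteValuationRing.addVal (integralClosure (R ⧸ p) (FractionRing (R ⧸ p)))
          (algebraMap (R ⧸ p) (integralClosure (R ⧸ p) (FractionRing (R ⧸ p)))
            (Ideal.Quotient.mk p y)) = (7 * n : ℕ) ∧
        IsDiscreteValuationRing.addVal (integralClosure (R ⧸ p) (FractionRing (R ⧸ p)))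
          (algebraMap (R ⧸ p) (integralClosure (R ⧸ p) (FractionRing (R ⧸ p)))
            (Ideal.Quotient.mk p z)) = (8 * n : ℕ) ∧
        IsDiscreteValuationRing.addVal (integralClosure (R ⧸ p) (FractionRing (R ⧸ p)))
          (algebraMap (R ⧸ p) (integralClosure (R ⧸ p) (FractionRing (R ⧸ p)))
            (Ideal.Quotient.mk p t)) = (9 * n : ℕ) ∧
        IsDiscreteValuationRing.addVal (integralClosure (R ⧸ p) (FractionRing (R ⧸ p)))
          (algebraMap (R ⧸ p) (integralClosure (R ⧸ p) (FractionRing (R ⧸ p)))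
            (Ideal.Quotient.mk p u)) = (10 * n : ℕ) := by
  haveI hpp : p.IsPrime := hp.isPrime
  intro hDVR
  set D := R ⧸ p with hD
  set K := FractionRing D with hK
  set V := integralClosure D K with hV
  -- `I ≤ p`
  have hIp : I ≤ p := by
    have h1 := hp.annihilator_le
    rwa [Submodule.annihilator_top, Ideal.annihilator_quotient] at h1
  have hmem : ∀ r ∈ ({y ^ 2 - x * z, y * z - x * t, z ^ 2 - y * t, y * t - x * u,
      z * t - y * u, t ^ 2 - z * u, z * u - x ^ 3, t * u - x ^ 2 * y, u ^ 2 - x ^ 2 * z} :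
        Set R), r ∈ p := fun r hr => hIp (hI ▸ Ideal.subset_span hr)
  have key : ∀ r s : R, r - s ∈ p → Ideal.Quotient.mk p r = Ideal.Quotient.mk p s := by
    intro r s hrs
    exact Ideal.Quotient.eq.mpr hrs
  have r1 : Ideal.Quotient.mk p (y ^ 2) = Ideal.Quotient.mk p (x * z) :=
    key _ _ (hmem _ (by simp))
  have r3 : Ideal.Quotient.mk p (z ^ 2) = Ideal.Quotient.mk p (y * t) :=
    key _ _ (hmem _ (by simp))
  have r6 : Ideal.Quotient.mk p (t ^ 2) = Ideal.Quotient.mk p (z * u) :=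
    key _ _ (hmem _ (by simp))
  have r7 : Ideal.Quotient.mk p (z * u) = Ideal.Quotient.mk p (x ^ 3) :=
    key _ _ (hmem _ (by simp))
  have r8 : Ideal.Quotient.mk p (t * u) = Ideal.Quotient.mk p (x ^ 2 * y) :=
    key _ _ (hmem _ (by simp))
  have r9 : Ideal.Quotient.mk p (u ^ 2) = Ideal.Quotient.mk p (x ^ 2 * z) :=
    key _ _ (hmem _ (by simp))
  have r2 : Ideal.Quotient.mk p (y * z) = Ideal.Quotient.mk p (x * t) :=
    key _ _ (hmem _ (by simp))
  have r4 : Ideal.Quotient.mk p (y * t) = Ideal.Quotient.mk p (x * u) :=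
    key _ _ (hmem _ (by simp))
  have r5 : Ideal.Quotient.mk p (z * t) = Ideal.Quotient.mk p (y * u) :=
    key _ _ (hmem _ (by simp))
  by_cases hx : Ideal.Quotient.mk p x = 0
  · -- then `p` is the maximal ideal, so `V` is a field; contradiction with DVR
    exfalso
    have hy : Ideal.Quotient.mk p y = 0 := by
      have : Ideal.Quotient.mk p y ^ 2 = 0 := by rw [← map_pow, r1, map_mul, hx, zero_mul]
      exact pow_eq_zero_iff two_ne_zero |>.mp this
    have hz : Ideal.Quotient.mk p z = 0 := by
      have : Ideal.Quotient.mk p z ^ 2 = 0 := by rw [← map_pow, r3, map_mul, hy, zero_mul]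
      exact pow_eq_zero_iff two_ne_zero |>.mp this
    have hu : Ideal.Quotient.mk p u = 0 := by
      have : Ideal.Quotient.mk p u ^ 2 = 0 := by
        rw [← map_pow, r9, map_mul, hz, mul_zero]
      exact pow_eq_zero_iff two_ne_zero |>.mp this
    have ht : Ideal.Quotient.mk p t = 0 := by
      have : Ideal.Quotient.mk p t ^ 2 = 0 := by
        rw [← map_pow, r6, map_mul, hu, mul_zero]
      exact pow_eq_zero_iff two_ne_zero |>.mp this
    have hmp : IsLocalRing.maximalIdeal R ≤ p := by
      rw [← hgen, Ideal.span_le]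
      intro r hr
      simp only [Set.mem_insert_iff, Set.mem_singleton_iff] at hr
      rcases hr with rfl | rfl | rfl | rfl | rfl <;>
        first
          | exact Ideal.Quotient.eq_zero_iff_mem.mp hx
          | exact Ideal.Quotient.eq_zero_iff_mem.mp hy
          | exact Ideal.Quotient.eq_zero_iff_mem.mp hz
          | exact Ideal.Quotient.eq_zero_iff_mem.mp ht
          | exact Ideal.Quotient.eq_zero_iff_mem.mp hu
    have hpm : p = IsLocalRing.maximalIdeal R :=
      le_antisymm (IsLocalRing.le_maximalIdeal hpp.ne_top) hmp
    have hmax : p.IsMaximal := hpm ▸ IsLocalRing.maximalIdeal.isMaximal R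
    have hfield : IsField D := (Ideal.Quotient.maximal_ideal_iff_isField_quotient p).mp hmax
    have hVfield : IsField V := isField_of_isIntegral_of_isField' hfield
    exact IsDiscreteValuationRing.not_isField V hVfield
  · -- main case
    have hinj : Function.Injective (algebraMap D V) := by
      intro a b hab
      have : algebraMap D K a = algebraMap D K b := congrArg Subtype.val hab
      exact IsFractionRing.injective D K this
    -- nonvanishing in `D`
    have hzu : Ideal.Quotient.mk p z * Ideal.Quotient.mk p u ≠ 0 := by
      rw [← map_mul, r7, map_pow]
      exact pow_ne_zero _ hx
    have hz : Ideal.Quotient.mk p z ≠ 0 := fun h => hzu (by rw [h, zero_mul])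
    have hu : Ideal.Quotient.mk p u ≠ 0 := fun h => hzu (by rw [h, mul_zero])
    have ht : Ideal.Quotient.mk p t ≠ 0 := by
      intro h
      apply hzu
      rw [← map_mul, ← r6, map_pow, h, zero_pow two_ne_zero]
    have hy : Ideal.Quotient.mk p y ≠ 0 := by
      intro h
      have : Ideal.Quotient.mk p x * Ideal.Quotient.mk p z = 0 := by
        rw [← map_mul, ← r1, map_pow, h, zero_pow two_ne_zero]
      rcases mul_eq_zero.mp this with h' | h'
      exacts [hx h', hz h']
    -- images in `V`
    set X := algebraMap D V (Ideal.Quotient.mk p x) with hX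
    set Y := algebraMap D V (Ideal.Quotient.mk p y) with hY
    set Z := algebraMap D V (Ideal.Quotient.mk p z) with hZ
    set T := algebraMap D V (Ideal.Quotient.mk p t) with hT
    set U := algebraMap D V (Ideal.Quotient.mk p u) with hU
    have hX0 : X ≠ 0 := by
      intro h
      exact hx (hinj (by rw [map_zero]; exact h))
    have hY0 : Y ≠ 0 := by
      intro h
      exact hy (hinj (by rw [map_zero]; exact h))
    have hZ0 : Z ≠ 0 := by
      intro h
      exact hz (hinj (by rw [map_zero]; exact h))
    have hT0 : T ≠ 0 := by
      intro h
      exact ht (hinj (by rw [map_zero]; exact h))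
    have hU0 : U ≠ 0 := by
      intro h
      exact hu (hinj (by rw [map_zero]; exact h))
    have R1 : Y * Y = X * Z := by
      rw [hY, hX, hZ, ← map_mul (algebraMap D V), ← map_mul (algebraMap D V)]
      exact congrArg _ (by rw [← map_mul (Ideal.Quotient.mk p), ← map_mul (Ideal.Quotient.mk p), show y * y = y ^ 2 from (sq y).symm]; exact r1)
    have R2 : Y * Z = X * T := by
      rw [hY, hX, hZ, hT, ← map_mul (algebraMap D V), ← map_mul (algebraMap D V)]
      exact congrArg _ (by rw [← map_mul (Ideal.Quotient.mk p), ← map_mul (Ideal.Quotient.mk p)]; exact r2)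
    have R3 : Z * Z = Y * T := by
      rw [hY, hZ, hT, ← map_mul (algebraMap D V), ← map_mul (algebraMap D V)]
      exact congrArg _ (by rw [← map_mul (Ideal.Quotient.mk p), ← map_mul (Ideal.Quotient.mk p), show z * z = z ^ 2 from (sq z).symm]; exact r3)
    have R4 : Y * T = X * U := by
      rw [hY, hX, hT, hU, ← map_mul (algebraMap D V), ← map_mul (algebraMap D V)]
      exact congrArg _ (by rw [← map_mul (Ideal.Quotient.mk p), ← map_mul (Ideal.Quotient.mk p)]; exact r4)
    have R5 : Z * T = Y * U := by
      rw [hY, hZ, hT, hU, ← map_mul (algebraMap D V), ← map_mul (algebraMap D V)]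
      exact congrArg _ (by rw [← map_mul (Ideal.Quotient.mk p), ← map_mul (Ideal.Quotient.mk p)]; exact r5)
    have R6 : T * T = Z * U := by
      rw [hZ, hT, hU, ← map_mul (algebraMap D V), ← map_mul (algebraMap D V)]
      exact congrArg _ (by rw [← map_mul (Ideal.Quotient.mk p), ← map_mul (Ideal.Quotient.mk p), show t * t = t ^ 2 from (sq t).symm]; exact r6)
    have R7 : Z * U = X * (X * X) := by
      rw [hX, hZ, hU, ← map_mul (algebraMap D V), ← map_mul (algebraMap D V), ← map_mul (algebraMap D V)]
      exact congrArg _ (by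
        rw [← map_mul (Ideal.Quotient.mk p), ← map_mul (Ideal.Quotient.mk p), ← map_mul (Ideal.Quotient.mk p), show x * (x * x) = x ^ 3 by ring]
        exact r7)
    have R8 : T * U = X * (X * Y) := by
      rw [hX, hY, hT, hU, ← map_mul (algebraMap D V), ← map_mul (algebraMap D V), ← map_mul (algebraMap D V)]
      exact congrArg _ (by
        rw [← map_mul (Ideal.Quotient.mk p), ← map_mul (Ideal.Quotient.mk p), ← map_mul (Ideal.Quotient.mk p), show x * (x * y) = x ^ 2 * y by ring]
        exact r8)
    have R9 : U * U = X * (X * Z) := by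
      rw [hX, hZ, hU, ← map_mul (algebraMap D V), ← map_mul (algebraMap D V), ← map_mul (algebraMap D V)]
      exact congrArg _ (by
        rw [← map_mul (Ideal.Quotient.mk p), ← map_mul (Ideal.Quotient.mk p), ← map_mul (Ideal.Quotient.mk p), show u * u = u ^ 2 from (sq u).symm,
          show x * (x * z) = x ^ 2 * z by ring]
        exact r9)
    -- valuations
    have hfin : ∀ W : V, W ≠ 0 → ∃ n : ℕ, (n : ℕ∞) = IsDiscreteValuationRing.addVal V W := by
      intro W hW
      exact WithTop.ne_top_iff_exists.mp
        (fun h => hW (IsDiscreteValuationRing.addVal_eq_top_iff.mp h))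
    obtain ⟨a, ha⟩ := hfin X hX0
    obtain ⟨b, hb⟩ := hfin Y hY0
    obtain ⟨c, hc⟩ := hfin Z hZ0
    obtain ⟨d, hd⟩ := hfin T hT0
    obtain ⟨e, he⟩ := hfin U hU0
    have val2 : ∀ W₁ W₂ W₃ W₄ : V, W₁ * W₂ = W₃ * W₄ →
        IsDiscreteValuationRing.addVal V W₁ + IsDiscreteValuationRing.addVal V W₂ =
          IsDiscreteValuationRing.addVal V W₃ + IsDiscreteValuationRing.addVal V W₄ := by
      intro W₁ W₂ W₃ W₄ h
      rw [← IsDiscreteValuationRing.addVal_mul, ← IsDiscreteValuationRing.addVal_mul, h]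
    have val3 : ∀ W₁ W₂ W₃ W₄ W₅ : V, W₁ * W₂ = W₃ * (W₄ * W₅) →
        IsDiscreteValuationRing.addVal V W₁ + IsDiscreteValuationRing.addVal V W₂ =
          IsDiscreteValuationRing.addVal V W₃ + (IsDiscreteValuationRing.addVal V W₄ +
            IsDiscreteValuationRing.addVal V W₅) := by
      intro W₁ W₂ W₃ W₄ W₅ h
      rw [← IsDiscreteValuationRing.addVal_mul, ← IsDiscreteValuationRing.addVal_mul,
        ← IsDiscreteValuationRing.addVal_mul, h]
    have e1 : b + b = a + c := by
      have := val2 _ _ _ _ R1; rw [← ha, ← hb, ← hc] at this; exact_mod_cast this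
    have e2 : b + c = a + d := by
      have := val2 _ _ _ _ R2; rw [← ha, ← hb, ← hc, ← hd] at this; exact_mod_cast this
    have e3 : c + c = b + d := by
      have := val2 _ _ _ _ R3; rw [← hb, ← hc, ← hd] at this; exact_mod_cast this
    have e4 : b + d = a + e := by
      have := val2 _ _ _ _ R4; rw [← ha, ← hb, ← hd, ← he] at this; exact_mod_cast this
    have e5 : c + d = b + e := by
      have := val2 _ _ _ _ R5; rw [← hb, ← hc, ← hd, ← he] at this; exact_mod_cast this
    have e6 : d + d = c + e := by
      have := val2 _ _ _ _ R6; rw [← hc, ← hd, ← he] at this; exact_mod_cast this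
    have e7 : c + e = a + (a + a) := by
      have := val3 _ _ _ _ _ R7; rw [← ha, ← hc, ← he] at this; exact_mod_cast this
    have e8 : d + e = a + (a + b) := by
      have := val3 _ _ _ _ _ R8; rw [← ha, ← hb, ← hd, ← he] at this; exact_mod_cast this
    have e9 : e + e = a + (a + c) := by
      have := val3 _ _ _ _ _ R9; rw [← ha, ← hc, ← he] at this; exact_mod_cast this
    -- `a ≥ 1`
    have ha1 : a ≠ 0 := by
      intro h0
      have hdvd : X ∣ 1 := by
        rw [← IsDiscreteValuationRing.addVal_le_iff_dvd, IsDiscreteValuationRing.addVal_one,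
          ← ha, h0]
        simp
      have hux : IsUnit (Ideal.Quotient.mk p x) :=
        isUnit_of_isUnit_map_integralClosure (isUnit_of_dvd_one hdvd)
      obtain ⟨w, hw⟩ := hux.exists_right_inv
      obtain ⟨d', rfl⟩ := Ideal.Quotient.mk_surjective w
      have hxd : x * d' - 1 ∈ p := by
        rw [← Ideal.Quotient.eq]
        simpa [map_mul] using hw
      have hxm : x ∈ IsLocalRing.maximalIdeal R := by
        rw [← hgen]; exact Ideal.subset_span (by simp)
      have h1m : (1 : R) ∈ IsLocalRing.maximalIdeal R := by
        have h2 : x * d' - 1 ∈ IsLocalRing.maximalIdeal R :=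
          IsLocalRing.le_maximalIdeal hpp.ne_top hxd
        have h3 : x * d' ∈ IsLocalRing.maximalIdeal R :=
          Ideal.mul_mem_right d' _ hxm
        simpa using Ideal.sub_mem _ h3 h2
      exact (IsLocalRing.maximalIdeal.isMaximal R).ne_top ((Ideal.eq_top_iff_one _).mpr h1m)
    obtain ⟨hn1, ea, eb, ec, ed, ee⟩ :
        1 ≤ a / 6 ∧ a = 6 * (a / 6) ∧ b = 7 * (a / 6) ∧ c = 8 * (a / 6) ∧
          d = 9 * (a / 6) ∧ e = 10 * (a / 6) := by omega
    refine ⟨a / 6, hn1, ?_, ?_, ?_, ?_, ?_⟩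
    · rw [← ha]; exact_mod_cast ea
    · rw [← hb]; exact_mod_cast eb
    · rw [← hc]; exact_mod_cast ec
    · rw [← hd]; exact_mod_cast ed
    · rw [← he]; exact_mod_cast ee
end
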